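/- arXiv:1305.1172 — 2 statements merged into one kernel-verified Lean document; each statement's English description precedes it below -/
import Mathlib

section
/- Let (X,d_X) be a compact connected geodesic space with finite metric Reeb graph (G,d_G) of d = d_X(r,·) and quotient map π : X → G. Then d_GH(X,G) ≤ (β_1(G)+1)·M, where β_1(G) is the first Betti number of G and M = sup_{p∈G} diam(π^{-1}(p)). -/
open Set Metric

noncomputable section

/-- A finite metric graph structure on a metric space `G`: a finite set of edges, each
isometrically parametrized by arc length on `[0, len e]`, covering `G`, with pairwise
disjoint open edges, and such that the metric of `G` is the associated shortest-path
metric (i.e. the largest pseudometric making all edge parametrizations 1-Lipschitz). -/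
structure MetricGraphStruct (G : Type*) [MetricSpace G] where
  /-- the (finite) index type of edges -/
  E : Type
  fintypeE : Fintype E
  /-- length of each edge -/
  len : E → ℝ
  len_pos : ∀ e, 0 < len e
  /-- arc-length parametrization of each edge on `[0, len e]` -/
  param : E → ℝ → G
  param_lipschitz : ∀ e, LipschitzOnWith 1 (param e) (Set.Icc 0 (len e))
  /-- the edges cover `G` -/
  cover : ∀ x : G, ∃ e, ∃ t ∈ Set.Icc 0 (len e), param e t = x
  /-- each open edge is simple -/
  injOn : ∀ e, Set.InjOn (param e) (Set.Ioo 0 (len e))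
  /-- open edges are pairwise disjoint -/
  disjoint_interiors : ∀ e₁ e₂, e₁ ≠ e₂ → ∀ s ∈ Set.Ioo 0 (len e₁), ∀ t ∈ Set.Ioo 0 (len e₂),
    param e₁ s ≠ param e₂ t
  /-- endpoints of edges do not lie in open edges -/
  endpoint_not_interior : ∀ e e', ∀ t ∈ Set.Ioo 0 (len e'),
    param e 0 ≠ param e' t ∧ param e (len e) ≠ param e' t
  /-- the metric of `G` is the shortest-path metric: it is maximal among pseudometrics
  making every edge parametrization 1-Lipschitz -/
  dist_maximal : ∀ δ : G → G → ℝ, (∀ p, δ p p = 0) → (∀ p q, δ p q = δ q p) →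
    (∀ p q s, δ p s ≤ δ p q + δ q s) →
    (∀ e, ∀ s ∈ Set.Icc 0 (len e), ∀ t ∈ Set.Icc 0 (len e),
      δ (param e s) (param e t) ≤ |s - t|) →
    ∀ p q, δ p q ≤ dist p q

namespace MetricGraphStruct

variable {G : Type*} [MetricSpace G] (M : MetricGraphStruct G)

/-- first endpoint of an edge -/
def src (e : M.E) : G := M.param e 0

/-- second endpoint of an edge -/
def tgt (e : M.E) : G := M.param e (M.len e)

/-- the set of vertices (endpoints of edges) -/
def vertexSet : Set G := {v | ∃ e, v = M.src e ∨ v = M.tgt e}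

/-- `N_E(α)`: the number of edges of length at most `α` -/
def NE (α : ℝ) : ℕ := Nat.card {e : M.E // M.len e ≤ α}

/-- the first Betti number of a connected finite graph: `#E - #V + 1` -/
def betti1 : ℕ := Nat.card M.E + 1 - Nat.card M.vertexSet

end MetricGraphStruct

end

/-- A geodesic metric space: any two points are joined by an isometrically embedded
segment. -/
def IsGeodesicSpace (X : Type*) [MetricSpace X] : Prop :=
  ∀ x y : X, ∃ γ : ℝ → X, γ 0 = x ∧ γ (dist x y) = y ∧
    ∀ s ∈ Set.Icc 0 (dist x y), ∀ t ∈ Set.Icc 0 (dist x y), dist (γ s) (γ t) = |s - t|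

/-- The Reeb relation of the distance function `d = d_X(r, ·)`: two points are related if
they have the same distance to `r` and lie in the same path-connected component of the
corresponding level set of `d`. -/
def reebRel {X : Type*} [MetricSpace X] (r : X) (x y : X) : Prop :=
  dist r x = dist r y ∧ JoinedIn {z | dist r z = dist r x} x y

/-- `G` is the metric Reeb graph of the distance function `d = d_X(r, ·)` on `X`:
`π : X → G` is the (continuous, surjective) quotient map of the Reeb relation, `d`
factors as `d_* ∘ π`, and `G` carries a finite metric graph structure whose edges are
parametrized so that `d_*` increases at unit speed along each edge (hence each edge has
length the variation of `d_*` along it), the metric on `G` being the associated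
shortest-path metric. -/
structure ReebGraphOf (X : Type*) [MetricSpace X] (r : X)
    (G : Type*) [MetricSpace G] where
  /-- the finite metric graph structure on `G` -/
  graph : MetricGraphStruct G
  /-- the quotient map -/
  π : X → G
  continuous_π : Continuous π
  surj : Function.Surjective π
  /-- `π` identifies exactly the points equivalent under the Reeb relation -/
  eq_iff : ∀ x y : X, π x = π y ↔ reebRel r x y
  /-- the function induced by `d` on the quotient -/
  dStar : G → ℝ
  dStar_π : ∀ x : X, dStar (π x) = dist r x
  /-- `d_*` increases at unit speed along each (oriented) edge -/
  dStar_param : ∀ e : graph.E, ∀ t ∈ Set.Icc 0 (graph.len e),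
    dStar (graph.param e t) = dStar (graph.param e 0) + t

namespace ReebGraphOf

variable {X : Type*} [MetricSpace X] {r : X} {G : Type*} [MetricSpace G]

/-- A merging vertex: a point of `G` which is the terminal endpoint of at least two
distinct edges (edges being oriented by increasing `d_*`). -/
def IsMergingVertex (R : ReebGraphOf X r G) (v : G) : Prop :=
  ∃ e₁ e₂ : R.graph.E, e₁ ≠ e₂ ∧ R.graph.tgt e₁ = v ∧ R.graph.tgt e₂ = v

/-- `M`: the supremum of the diameters of the fibers of `π`. -/
noncomputable def fiberDiamSup (R : ReebGraphOf X r G) : ℝ := ⨆ p : G, Metric.diam (R.π ⁻¹' {p})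

end ReebGraphOf

namespace ReebAux

open ReebGraphOf

instance instFintypeE {G : Type*} [MetricSpace G] (M : MetricGraphStruct G) : Fintype M.E :=
  M.fintypeE

variable {X : Type*} [MetricSpace X] {r : X} {G : Type*} [MetricSpace G]

section Basic

variable (R : ReebGraphOf X r G)

lemma dStar_nonneg (g : G) : 0 ≤ R.dStar g := by
  obtain ⟨x, rfl⟩ := R.surj g
  rw [R.dStar_π]; exact dist_nonneg

lemma hts {e : R.graph.E} {t : ℝ} (ht : t ∈ Set.Icc 0 (R.graph.len e)) :
    R.dStar (R.graph.param e t) = R.dStar (R.graph.src e) + t := R.dStar_param e t ht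

lemma hts_tgt (e : R.graph.E) :
    R.dStar (R.graph.tgt e) = R.dStar (R.graph.src e) + R.graph.len e :=
  R.dStar_param e _ ⟨le_of_lt (R.graph.len_pos e), le_refl _⟩

lemma param_inj {e : R.graph.E} {s t : ℝ} (hs : s ∈ Set.Icc 0 (R.graph.len e))
    (ht : t ∈ Set.Icc 0 (R.graph.len e))
    (h : R.graph.param e s = R.graph.param e t) : s = t := by
  have h1 := hts R hs
  rw [h, hts R ht] at h1; linarith

lemma dist_param_le {e : R.graph.E} (s t : ℝ) (hs : s ∈ Set.Icc 0 (R.graph.len e))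
    (ht : t ∈ Set.Icc 0 (R.graph.len e)) :
    dist (R.graph.param e s) (R.graph.param e t) ≤ |s - t| := by
  simpa [Real.dist_eq] using (R.graph.param_lipschitz e).dist_le_mul s hs t ht

lemma edge_eq_of_interior {e f : R.graph.E} {τ σ : ℝ} (hτ : τ ∈ Set.Ioo 0 (R.graph.len e))
    (hσ : σ ∈ Set.Icc 0 (R.graph.len f))
    (h : R.graph.param e τ = R.graph.param f σ) : e = f := by
  by_contra hne
  rcases eq_or_lt_of_le hσ.1 with h0 | h0
  · exact (R.graph.endpoint_not_interior f e τ hτ).1 (by rw [← h0] at h; exact h.symm)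
  rcases eq_or_lt_of_le hσ.2 with hl | hl
  · exact (R.graph.endpoint_not_interior f e τ hτ).2 (by rw [hl] at h; exact h.symm)
  · exact R.graph.disjoint_interiors e f hne τ hτ σ ⟨h0, hl⟩ h

lemma vertex_not_interior {v : G} (hv : ∃ e, v = R.graph.src e ∨ v = R.graph.tgt e) :
    ∀ f, ∀ w ∈ Set.Ioo 0 (R.graph.len f), v ≠ R.graph.param f w := by
  obtain ⟨e, he⟩ := hv
  intro f w hw hveq
  rcases he with he | he
  · exact (R.graph.endpoint_not_interior e f w hw).1 (he.symm.trans hveq)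
  · exact (R.graph.endpoint_not_interior e f w hw).2 (he.symm.trans hveq)

variable [CompactSpace X]

lemma fiberDiamSup_bddAbove : BddAbove (Set.range fun p : G => Metric.diam (R.π ⁻¹' {p})) := by
  refine ⟨Metric.diam (Set.univ : Set X), ?_⟩
  rintro d ⟨p, rfl⟩
  exact Metric.diam_mono (Set.subset_univ _) isCompact_univ.isBounded

lemma dist_le_Msup {u v : X} (h : R.π u = R.π v) : dist u v ≤ R.fiberDiamSup := by
  have h1 : dist u v ≤ Metric.diam (R.π ⁻¹' {R.π v}) := by
    refine Metric.dist_le_diam_of_mem (isCompact_univ.isBounded.subset (Set.subset_univ _)) ?_ ?_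
    · simpa using h
    · simp
  exact h1.trans (le_ciSup (fiberDiamSup_bddAbove R) (R.π v))

lemma Msup_nonneg [Nonempty X] : 0 ≤ R.fiberDiamSup := by
  have := dist_le_Msup R (rfl : R.π (Classical.arbitrary X) = _)
  simpa using this

end Basic

end ReebAux
namespace ReebAux

variable {X : Type*} [MetricSpace X] {r : X} {G : Type*} [MetricSpace G]

section Local

variable (R : ReebGraphOf X r G)

/-- the closed image of an edge -/
def edgeSet (e : R.graph.E) : Set G := R.graph.param e '' Set.Icc 0 (R.graph.len e)

lemma edgeSet_compact (e : R.graph.E) : IsCompact (edgeSet R e) :=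
  isCompact_Icc.image_of_continuousOn (R.graph.param_lipschitz e).continuousOn

lemma mem_edgeSet_self {e : R.graph.E} {t : ℝ} (ht : t ∈ Set.Icc 0 (R.graph.len e)) :
    R.graph.param e t ∈ edgeSet R e := ⟨t, ht, rfl⟩

/-- Local structure: a small ball around `x` only meets edges through `x`. -/
lemma exists_ball_edge (x : G) :
    ∃ ε > 0, ∀ y, dist x y < ε → ∀ f, y ∈ edgeSet R f → x ∈ edgeSet R f := by
  classical
  set bad : Set G := ⋃ f ∈ {f : R.graph.E | x ∉ edgeSet R f}, edgeSet R f with hbad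
  have hclosed : IsClosed bad := by
    refine Set.Finite.isClosed_biUnion (Set.toFinite _) ?_
    exact fun f _ => (edgeSet_compact R f).isClosed
  have hxbad : x ∉ bad := by
    intro hx
    simp only [hbad, Set.mem_iUnion] at hx
    obtain ⟨f, hf, hxf⟩ := hx
    exact hf hxf
  by_cases hne : bad.Nonempty
  · refine ⟨Metric.infDist x bad, ?_, ?_⟩
    · exact (hclosed.notMem_iff_infDist_pos hne).1 hxbad
    · intro y hy f hyf
      by_contra hxf
      have : y ∈ bad := Set.mem_biUnion hxf hyf
      exact absurd (Metric.infDist_le_dist_of_mem this) (by linarith)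
  · refine ⟨1, one_pos, ?_⟩
    intro y _ f hyf
    by_contra hxf
    exact hne ⟨y, Set.mem_biUnion hxf hyf⟩

/-- Locally, the distance in `G` is bounded by the difference in heights. -/
lemma exists_ball_dist (x : G) :
    ∃ ε > 0, ∀ y, dist x y < ε → dist x y ≤ |R.dStar x - R.dStar y| := by
  obtain ⟨ε, hε, hball⟩ := exists_ball_edge R x
  refine ⟨ε, hε, fun y hy => ?_⟩
  obtain ⟨f, t, ht, hft⟩ := R.graph.cover y
  obtain ⟨s, hs, hfs⟩ := hball y hy f ⟨t, ht, hft⟩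
  rw [← hfs, ← hft]
  refine (dist_param_le R s t hs ht).trans (le_of_eq ?_)
  rw [hts R hs, hts R ht]
  ring_nf

/-- Chaining the local estimate along a continuous path whose height is 1-Lipschitz. -/
lemma dist_le_of_path {a b : ℝ} (hab : a ≤ b) (c : ℝ → G)
    (hc : ContinuousOn c (Set.Icc a b))
    (hht : ∀ u ∈ Set.Icc a b, ∀ v ∈ Set.Icc a b,
      |R.dStar (c u) - R.dStar (c v)| ≤ |u - v|) :
    dist (c a) (c b) ≤ b - a := by
  set S : Set ℝ := {t | t ∈ Set.Icc a b ∧ dist (c a) (c t) ≤ t - a} with hS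
  have hSne : S.Nonempty := ⟨a, ⟨le_refl a, hab⟩, by simp⟩
  have hSbdd : BddAbove S := ⟨b, fun t ht => ht.1.2⟩
  have hSclosed : IsClosed S := by
    have : S = Set.Icc a b ∩ (fun t => dist (c a) (c t) - (t - a)) ⁻¹' Set.Iic 0 := by
      ext t
      simp only [hS, Set.mem_inter_iff, Set.mem_preimage, Set.mem_Iic, Set.mem_setOf_eq]
      constructor
      · rintro ⟨h1, h2⟩; exact ⟨h1, by linarith⟩
      · rintro ⟨h1, h2⟩; exact ⟨h1, by linarith⟩
    rw [this]
    refine ContinuousOn.preimage_isClosed_of_isClosed ?_ isClosed_Icc isClosed_Iic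
    refine ContinuousOn.sub ?_ (continuousOn_id.sub continuousOn_const)
    exact (continuous_const.dist continuous_id).comp_continuousOn hc
  have hTS : sSup S ∈ S := hSclosed.csSup_mem hSne hSbdd
  set T := sSup S with hT
  rcases eq_or_lt_of_le hTS.1.2 with hTb | hTb
  · have := hTS.2; rw [hTb] at this; exact this
  · exfalso
    obtain ⟨ε, hε, hloc⟩ := exists_ball_dist R (c T)
    have hcT : ContinuousWithinAt c (Set.Icc a b) T := hc T hTS.1
    have : ∀ᶠ t in nhdsWithin T (Set.Icc a b), dist (c t) (c T) < ε := by
      have := hcT.tendsto (Metric.ball_mem_nhds (c T) hε)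
      filter_upwards [this] with t ht using Metric.mem_ball.1 ht
    obtain ⟨δ, hδ, hδball⟩ := Metric.mem_nhdsWithin_iff.1 this
    set t' := min b (T + δ / 2) with ht'
    have ht'mem : t' ∈ Set.Icc a b := ⟨le_trans hTS.1.1 (le_min hTb.le (by linarith)), min_le_left _ _⟩
    have ht'ball : t' ∈ Metric.ball T δ := by
      rw [Metric.mem_ball, Real.dist_eq, abs_lt]
      constructor
      · have : T < t' := lt_min hTb (by linarith)
        linarith
      · have : t' ≤ T + δ / 2 := min_le_right _ _
        linarith
    have hd : dist (c t') (c T) < ε := hδball ⟨ht'ball, ht'mem⟩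
    have h1 : dist (c T) (c t') ≤ |T - t'| := by
      have := hloc (c t') (by rw [dist_comm]; exact hd)
      exact this.trans (hht T hTS.1 t' ht'mem)
    have hTt' : T < t' := lt_min hTb (by linarith)
    have ht'S : t' ∈ S := by
      refine ⟨ht'mem, ?_⟩
      calc dist (c a) (c t') ≤ dist (c a) (c T) + dist (c T) (c t') := dist_triangle _ _ _
        _ ≤ (T - a) + |T - t'| := add_le_add hTS.2 h1
        _ = t' - a := by rw [abs_sub_comm, abs_of_nonneg (by linarith)]; ring
    exact absurd (le_csSup hSbdd ht'S) (not_le.2 hTt')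

/-- `π` is 1-Lipschitz. -/
lemma pi_lipschitz (hX : IsGeodesicSpace X) (x y : X) :
    dist (R.π x) (R.π y) ≤ dist x y := by
  obtain ⟨γ, hγ0, hγ1, hγiso⟩ := hX x y
  have h0D : (0:ℝ) ≤ dist x y := dist_nonneg
  have hcont : ContinuousOn (fun u => R.π (γ u)) (Set.Icc 0 (dist x y)) := by
    refine R.continuous_π.comp_continuousOn ?_
    refine (LipschitzOnWith.of_dist_le_mul (K := 1) ?_).continuousOn
    intro u hu v hv
    rw [hγiso u hu v hv, Real.dist_eq]
    simp
  have := dist_le_of_path R h0D (fun u => R.π (γ u)) hcont ?_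
  · simp only [hγ0, hγ1] at this
    simpa using this
  · intro u hu v hv
    rw [R.dStar_π, R.dStar_π]
    calc |dist r (γ u) - dist r (γ v)| = |dist (γ u) r - dist (γ v) r| := by
          rw [dist_comm r (γ u), dist_comm r (γ v)]
      _ ≤ dist (γ u) (γ v) := abs_dist_sub_le _ _ _
      _ = |u - v| := hγiso u hu v hv

end Local

end ReebAux
namespace ReebAux

variable {X : Type*} [MetricSpace X] {r : X} {G : Type*} [MetricSpace G]

section Descent

variable (R : ReebGraphOf X r G)

lemma geod_contOn {D : ℝ} {γ : ℝ → X}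
    (hiso : ∀ s ∈ Set.Icc 0 D, ∀ t ∈ Set.Icc 0 D, dist (γ s) (γ t) = |s - t|) :
    ContinuousOn γ (Set.Icc 0 D) := by
  refine (LipschitzOnWith.of_dist_le_mul (K := 1) ?_).continuousOn
  intro u hu v hv
  rw [hiso u hu v hv, Real.dist_eq]
  simp

lemma geod_height {γ : ℝ → X} {D : ℝ} (hγ0 : γ 0 = r)
    (hiso : ∀ s ∈ Set.Icc 0 D, ∀ t ∈ Set.Icc 0 D, dist (γ s) (γ t) = |s - t|)
    (hD : 0 ≤ D) {u : ℝ} (hu : u ∈ Set.Icc 0 D) : dist r (γ u) = u := by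
  have := hiso 0 ⟨le_refl 0, hD⟩ u hu
  rw [hγ0] at this
  rw [this, abs_sub_comm, abs_of_nonneg (by simpa using hu.1)]
  simp

/-- The projection of a geodesic from the root to a point in the fiber of an interior
point of an edge descends along that edge. -/
lemma descent_on_edge (hX : IsGeodesicSpace X) {e : R.graph.E} {t' : ℝ}
    (ht' : t' ∈ Set.Ioo 0 (R.graph.len e)) {x : X} (hx : R.π x = R.graph.param e t')
    {γ : ℝ → X} (hγ0 : γ 0 = r) (hγx : γ (dist r x) = x)
    (hiso : ∀ s ∈ Set.Icc 0 (dist r x), ∀ t ∈ Set.Icc 0 (dist r x),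
      dist (γ s) (γ t) = |s - t|) :
    ∀ u₀ ∈ Set.Icc (R.dStar (R.graph.src e)) (dist r x),
      R.π (γ u₀) = R.graph.param e (u₀ - R.dStar (R.graph.src e)) := by
  set a := R.dStar (R.graph.src e) with ha
  have ha0 : 0 ≤ a := dStar_nonneg R _
  have hdrx : dist r x = a + t' := by
    rw [← R.dStar_π x, hx, hts R ⟨ht'.1.le, ht'.2.le⟩]
  have hD0 : (0:ℝ) ≤ dist r x := dist_nonneg
  intro u₀ hu₀
  -- the set of parameters above u₀ where the projection follows the edge
  set S : Set ℝ := {u | u ∈ Set.Icc u₀ (a + t') ∧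
      R.π (γ u) = R.graph.param e (u - a)} with hS
  have hmapsto : ∀ u ∈ Set.Icc u₀ (a + t'), u ∈ Set.Icc 0 (dist r x) := by
    intro u hu
    exact ⟨le_trans (le_trans ha0 hu₀.1) hu.1, by rw [hdrx]; exact hu.2⟩
  have hmapsto' : ∀ u ∈ Set.Icc u₀ (a + t'), u - a ∈ Set.Icc 0 (R.graph.len e) := by
    intro u hu
    constructor
    · have := le_trans hu₀.1 hu.1; linarith [hu₀.1]
    · have := hu.2; linarith [ht'.2]
  have htop : a + t' ∈ S := by
    refine ⟨⟨by rw [← hdrx]; exact hu₀.2, le_refl _⟩, ?_⟩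
    rw [← hdrx, hγx, hx]
    congr 1
    rw [hdrx]
    ring
  have hSne : S.Nonempty := ⟨_, htop⟩
  have hSbdd : BddBelow S := ⟨u₀, fun u hu => hu.1.1⟩
  have hγcont : ContinuousOn γ (Set.Icc 0 (dist r x)) := geod_contOn hiso
  have hccont : ContinuousOn (fun u => R.π (γ u)) (Set.Icc u₀ (a + t')) :=
    R.continuous_π.comp_continuousOn (hγcont.mono hmapsto)
  have hpcont : ContinuousOn (fun u => R.graph.param e (u - a)) (Set.Icc u₀ (a + t')) := by
    refine (R.graph.param_lipschitz e).continuousOn.comp ?_ hmapsto'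
    exact (continuousOn_id.sub continuousOn_const)
  have hSclosed : IsClosed S := by
    have : S = Set.Icc u₀ (a + t') ∩
        (fun u => dist (R.π (γ u)) (R.graph.param e (u - a))) ⁻¹' Set.Iic 0 := by
      ext u
      simp only [hS, Set.mem_inter_iff, Set.mem_preimage, Set.mem_Iic, Set.mem_setOf_eq]
      constructor
      · rintro ⟨h1, h2⟩
        exact ⟨h1, by rw [h2]; simp⟩
      · rintro ⟨h1, h2⟩
        exact ⟨h1, eq_of_dist_eq_zero (le_antisymm h2 dist_nonneg)⟩
    rw [this]
    refine ContinuousOn.preimage_isClosed_of_isClosed ?_ isClosed_Icc isClosed_Iic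
    exact continuous_dist.comp_continuousOn (hccont.prodMk hpcont)
  have hm : sInf S ∈ S := hSclosed.csInf_mem hSne hSbdd
  set m := sInf S with hmdef
  rcases eq_or_lt_of_le hm.1.1 with hmu | hmu
  · rw [hmu]; exact hm.2
  · exfalso
    -- m > u₀ ; push lower
    have hma : a < m := lt_of_le_of_lt hu₀.1 hmu
    have hmInt : m - a ∈ Set.Ioo 0 (R.graph.len e) := by
      constructor
      · linarith
      · have := hm.1.2; have := ht'.2; linarith
    obtain ⟨ε, hε, hball⟩ := exists_ball_edge R (R.graph.param e (m - a))
    have hcm : ContinuousWithinAt (fun u => R.π (γ u)) (Set.Icc u₀ (a + t')) m :=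
      hccont m hm.1
    have hev : ∀ᶠ u in nhdsWithin m (Set.Icc u₀ (a + t')),
        dist (R.π (γ u)) (R.π (γ m)) < ε := by
      have := hcm.tendsto (Metric.ball_mem_nhds _ hε)
      filter_upwards [this] with u hu using Metric.mem_ball.1 hu
    obtain ⟨δ, hδ, hδball⟩ := Metric.mem_nhdsWithin_iff.1 hev
    set u := max u₀ (m - δ / 2) with hu
    have hum : u < m := max_lt hmu (by linarith)
    have humem : u ∈ Set.Icc u₀ (a + t') := ⟨le_max_left _ _, le_trans hum.le hm.1.2⟩
    have huball : u ∈ Metric.ball m δ := by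
      rw [Metric.mem_ball, Real.dist_eq, abs_lt]
      have : m - δ / 2 ≤ u := le_max_right _ _
      constructor <;> [linarith; linarith]
    have hdu : dist (R.π (γ u)) (R.π (γ m)) < ε := hδball ⟨huball, humem⟩
    obtain ⟨f, w', hw', hfw'⟩ := R.graph.cover (R.π (γ u))
    have hxm : R.π (γ m) = R.graph.param e (m - a) := hm.2
    have hmem' : R.graph.param e (m - a) ∈ edgeSet R f := by
      refine hball _ ?_ f ⟨w', hw', hfw'⟩
      rw [← hxm, dist_comm]; exact hdu
    obtain ⟨σ, hσ, hfσ⟩ := hmem'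
    have hef : e = f := edge_eq_of_interior R hmInt hσ hfσ.symm
    subst hef
    -- heights give the parameter
    have hhu : dist r (γ u) = u := geod_height hγ0 hiso hD0 (hmapsto u humem)
    have hw'val : w' = u - a := by
      have h1 : R.dStar (R.π (γ u)) = u := by rw [R.dStar_π]; exact hhu
      rw [← hfw', hts R hw'] at h1
      linarith
    have huS : u ∈ S := by
      refine ⟨humem, ?_⟩
      rw [← hfw', hw'val]
    exact absurd (csInf_le hSbdd huS) (not_le.2 hum)

/-- Exact descent from an interior fiber point. -/
lemma desc_interior (hX : IsGeodesicSpace X) {e : R.graph.E} {t' : ℝ}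
    (ht' : t' ∈ Set.Ioo 0 (R.graph.len e)) {x : X} (hx : R.π x = R.graph.param e t')
    {t : ℝ} (ht : t ∈ Set.Icc 0 t') :
    ∃ y, R.π y = R.graph.param e t ∧ dist x y ≤ t' - t := by
  obtain ⟨γ, hγ0, hγx, hiso⟩ := hX r x
  set a := R.dStar (R.graph.src e) with ha
  have ha0 : 0 ≤ a := dStar_nonneg R _
  have hdrx : dist r x = a + t' := by
    rw [← R.dStar_π x, hx, hts R ⟨ht'.1.le, ht'.2.le⟩]
  have hmem : a + t ∈ Set.Icc a (dist r x) := by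
    rw [hdrx]
    exact ⟨by linarith [ht.1], by linarith [ht.2]⟩
  have hdesc := descent_on_edge R hX ht' hx hγ0 hγx hiso (a + t) hmem
  refine ⟨γ (a + t), by rw [hdesc]; congr 1; ring, ?_⟩
  have hx' : x = γ (a + t') := by rw [← hdrx, hγx]
  rw [hx']
  rw [hiso (a + t') (by rw [hdrx]; exact ⟨by linarith [ht.1, ht'.1.le], le_refl _⟩)
      (a + t) (by rw [hdrx]; exact ⟨by linarith [ht.1], by linarith [ht.2]⟩)]
  rw [abs_of_nonneg (by linarith [ht.2])]
  linarith

end Descent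

end ReebAux
namespace ReebAux

open Filter Topology

variable {X : Type*} [MetricSpace X] {r : X} {G : Type*} [MetricSpace G]

section Limits

variable (R : ReebGraphOf X r G)

/-- A pair of points in the fibers of the top of an edge and of a lower point of the
edge, at the exact distance. -/
lemma limit_pair [CompactSpace X] (hX : IsGeodesicSpace X) {e : R.graph.E} {t : ℝ}
    (ht : t ∈ Set.Ico 0 (R.graph.len e)) :
    ∃ z y, R.π z = R.graph.tgt e ∧ R.π y = R.graph.param e t ∧
      dist z y ≤ R.graph.len e - t := by
  set L := R.graph.len e with hL
  have hL0 : 0 < L := R.graph.len_pos e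
  have hLt : 0 < L - t := by simp only [hL]; linarith [ht.2]
  set s : ℕ → ℝ := fun k => L - (L - t) / (k + 2) with hs
  have hsIoo : ∀ k, s k ∈ Set.Ioo t L := by
    intro k
    have h2 : (0:ℝ) < (k:ℝ) + 2 := by positivity
    have hlt : (L - t) / (k + 2) ≤ (L - t) / 2 := by
      apply div_le_div_of_nonneg_left hLt.le (by norm_num)
      have : (0:ℝ) ≤ (k:ℝ) := Nat.cast_nonneg k
      linarith
    have hpos : 0 < (L - t) / (k + 2) := by positivity
    constructor
    · simp only [hs]; nlinarith
    · simp only [hs]; linarith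
  have hzk : ∀ k : ℕ, ∃ zy : X × X, R.π zy.1 = R.graph.param e (s k) ∧
      R.π zy.2 = R.graph.param e t ∧ dist zy.1 zy.2 ≤ s k - t := by
    intro k
    obtain ⟨z, hz⟩ := R.surj (R.graph.param e (s k))
    have hski : s k ∈ Set.Ioo 0 L := ⟨lt_of_le_of_lt ht.1 (hsIoo k).1, (hsIoo k).2⟩
    obtain ⟨y, hy, hdy⟩ := desc_interior R hX hski hz ⟨ht.1, (hsIoo k).1.le⟩
    exact ⟨(z, y), hz, hy, hdy⟩
  choose zy hz hy hd using hzk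
  obtain ⟨p, φ, hφ, hconv⟩ := CompactSpace.tendsto_subseq zy
  have hz1 : Tendsto (fun k => (zy (φ k)).1) atTop (nhds p.1) :=
    ((continuous_fst.tendsto p).comp hconv)
  have hz2 : Tendsto (fun k => (zy (φ k)).2) atTop (nhds p.2) :=
    ((continuous_snd.tendsto p).comp hconv)
  have hstend : Tendsto (fun k => s (φ k)) atTop (nhds L) := by
    have h1 : Tendsto (fun k : ℕ => ((φ k : ℝ) + 2)) atTop atTop := by
      apply tendsto_atTop_add_const_right
      exact tendsto_natCast_atTop_atTop.comp hφ.tendsto_atTop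
    have h2 : Tendsto (fun k : ℕ => (L - t) / ((φ k : ℝ) + 2)) atTop (nhds 0) :=
      Tendsto.div_atTop tendsto_const_nhds h1
    have h3 : Tendsto (fun k : ℕ => L - (L - t) / ((φ k : ℝ) + 2)) atTop (nhds (L - 0)) :=
      Tendsto.const_sub L h2
    simpa using h3
  have hparamtend : Tendsto (fun k => R.graph.param e (s (φ k))) atTop
      (nhds (R.graph.tgt e)) := by
    have hcw : ContinuousWithinAt (R.graph.param e) (Set.Icc 0 L) L :=
      (R.graph.param_lipschitz e).continuousOn L ⟨hL0.le, le_refl L⟩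
    have hin : Tendsto (fun k => s (φ k)) atTop (nhdsWithin L (Set.Icc 0 L)) := by
      refine tendsto_nhdsWithin_of_tendsto_nhds_of_eventually_within _ hstend ?_
      filter_upwards with k
      exact ⟨le_trans ht.1 (hsIoo (φ k)).1.le, (hsIoo (φ k)).2.le⟩
    exact hcw.tendsto.comp hin
  have hπz : R.π p.1 = R.graph.tgt e := by
    have h1 : Tendsto (fun k => R.π (zy (φ k)).1) atTop (nhds (R.π p.1)) :=
      (R.continuous_π.tendsto p.1).comp hz1
    have h2 : (fun k => R.π (zy (φ k)).1) = fun k => R.graph.param e (s (φ k)) :=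
      funext fun k => hz (φ k)
    rw [h2] at h1
    exact tendsto_nhds_unique h1 hparamtend
  have hπy : R.π p.2 = R.graph.param e t := by
    have h1 : Tendsto (fun k => R.π (zy (φ k)).2) atTop (nhds (R.π p.2)) :=
      (R.continuous_π.tendsto p.2).comp hz2
    have h2 : (fun k => R.π (zy (φ k)).2) = fun _ => R.graph.param e t :=
      funext fun k => hy (φ k)
    rw [h2] at h1
    exact tendsto_nhds_unique h1 tendsto_const_nhds
  refine ⟨p.1, p.2, hπz, hπy, ?_⟩
  have hdtend : Tendsto (fun k => dist (zy (φ k)).1 (zy (φ k)).2) atTop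
      (nhds (dist p.1 p.2)) := hz1.dist hz2
  refine le_of_tendsto hdtend ?_
  filter_upwards with k
  exact le_trans (hd (φ k)) (by linarith [(hsIoo (φ k)).2])

/-- Every point strictly above the root, which is not interior to any edge, is the
target of an edge descending from it, realized by an exact descent. -/
lemma exists_down_edge (hX : IsGeodesicSpace X) {v : G}
    (hint : ∀ f, ∀ w ∈ Set.Ioo 0 (R.graph.len f), v ≠ R.graph.param f w)
    {x : X} (hx : R.π x = v) (hv : 0 < dist r x) {η : ℝ} (hη : 0 < η) :
    ∃ f, R.graph.tgt f = v ∧ ∃ w ∈ Set.Ioo 0 (R.graph.len f),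
      R.graph.len f - w < η ∧ ∃ y, R.π y = R.graph.param f w ∧
        dist x y = R.graph.len f - w := by
  classical
  obtain ⟨γ, hγ0, hγx, hiso⟩ := hX r x
  set h := dist r x with hh
  -- a positive lower bound for all edge lengths
  obtain ⟨e₀, _⟩ := R.graph.cover v
  haveI : Nonempty R.graph.E := ⟨e₀⟩
  set minL : ℝ := (Finset.univ.image R.graph.len).min' (by simp) with hminL
  have hminLpos : 0 < minL := by
    obtain ⟨f, _, hf⟩ := Finset.mem_image.1 ((Finset.univ.image R.graph.len).min'_mem (by simp))
    rw [hminL, ← hf]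
    exact R.graph.len_pos f
  have hminLle : ∀ f, minL ≤ R.graph.len f := fun f =>
    Finset.min'_le _ _ (Finset.mem_image_of_mem _ (Finset.mem_univ f))
  obtain ⟨ε, hε, hball⟩ := exists_ball_edge R v
  have hccont : ContinuousOn (fun u => R.π (γ u)) (Set.Icc 0 h) :=
    R.continuous_π.comp_continuousOn (geod_contOn hiso)
  have hcw : ContinuousWithinAt (fun u => R.π (γ u)) (Set.Icc 0 h) h :=
    hccont h ⟨hv.le, le_refl h⟩
  have hev : ∀ᶠ u in nhdsWithin h (Set.Icc 0 h),
      dist (R.π (γ u)) (R.π (γ h)) < ε := by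
    have := hcw.tendsto (Metric.ball_mem_nhds _ hε)
    filter_upwards [this] with u hu using Metric.mem_ball.1 hu
  obtain ⟨δ₀, hδ₀, hδball⟩ := Metric.mem_nhdsWithin_iff.1 hev
  set δ : ℝ := min (min (δ₀ / 2) (minL / 2)) (min (η / 2) (h / 2)) with hδdef
  have hδpos : 0 < δ := by
    refine lt_min (lt_min (by linarith) (by linarith)) (lt_min (by linarith) (by linarith))
  have hδδ₀ : δ < δ₀ := lt_of_le_of_lt (le_trans (min_le_left _ _) (min_le_left _ _)) (by linarith)
  have hδminL : δ < minL := lt_of_le_of_lt (le_trans (min_le_left _ _) (min_le_right _ _)) (by linarith)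
  have hδη : δ < η := lt_of_le_of_lt (le_trans (min_le_right _ _) (min_le_left _ _)) (by linarith)
  have hδh : δ ≤ h := le_trans (le_trans (min_le_right _ _) (min_le_right _ _)) (by linarith)
  set u := h - δ with hu
  have humem : u ∈ Set.Icc 0 h := ⟨by linarith, by linarith⟩
  have huball : u ∈ Metric.ball h δ₀ := by
    rw [Metric.mem_ball, Real.dist_eq, abs_lt]
    constructor <;> [skip; linarith]
    simp only [hu]
    linarith
  have hγh : γ h = x := hγx
  have hdu : dist (R.π (γ u)) v < ε := by
    have := hδball ⟨huball, humem⟩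
    rwa [hγh, hx] at this
  obtain ⟨f, w', hw', hfw'⟩ := R.graph.cover (R.π (γ u))
  have hvf : v ∈ edgeSet R f := by
    refine hball _ (by rw [dist_comm]; exact hdu) f ⟨w', hw', hfw'⟩
  obtain ⟨w₀, hw₀, hfw₀⟩ := hvf
  -- heights
  have hhu : dist r (γ u) = u := geod_height hγ0 hiso hv.le humem
  have hw'eq : R.dStar (R.graph.src f) + w' = u := by
    have h1 : R.dStar (R.π (γ u)) = u := by rw [R.dStar_π]; exact hhu
    rw [← hfw', hts R hw'] at h1
    linarith
  have hw₀eq : R.dStar (R.graph.src f) + w₀ = h := by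
    have h1 : R.dStar v = h := by rw [← hx, R.dStar_π]
    rw [← hfw₀, hts R hw₀] at h1
    linarith
  have hw₀w' : w₀ - w' = δ := by simp only [hu] at hw'eq; linarith
  have hw₀len : w₀ = R.graph.len f := by
    rcases eq_or_lt_of_le hw₀.1 with h0 | h0
    · exfalso; linarith [hw'.1, hδpos, hw₀w']
    rcases eq_or_lt_of_le hw₀.2 with hl | hl
    · exact hl
    · exact absurd hfw₀.symm (hint f w₀ ⟨h0, hl⟩)
  refine ⟨f, by rw [MetricGraphStruct.tgt, ← hw₀len, hfw₀], w', ?_, ?_, γ u, hfw'.symm, ?_⟩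
  · constructor
    · have h1 : minL ≤ R.graph.len f := hminLle f
      linarith [hw₀w', hw₀len, hδminL]
    · linarith [hw₀w', hw₀len, hδpos]
  · linarith [hw₀w', hw₀len, hδη]
  · rw [← hγh, hiso h ⟨hv.le, le_refl h⟩ u humem]
    rw [abs_of_nonneg (by linarith [hδpos])]
    linarith [hw₀w', hw₀len]

end Limits

end ReebAux
namespace ReebAux

variable {X : Type*} [MetricSpace X] {r : X} {G : Type*} [MetricSpace G]

section FromTop

variable (R : ReebGraphOf X r G)

lemma tgt_not_interior (e : R.graph.E) :
    ∀ f, ∀ w ∈ Set.Ioo 0 (R.graph.len f), R.graph.tgt e ≠ R.graph.param f w :=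
  vertex_not_interior R ⟨e, Or.inr rfl⟩

lemma dStar_tgt_pos (e : R.graph.E) : 0 < R.dStar (R.graph.tgt e) := by
  rw [hts_tgt R e]
  have := dStar_nonneg R (R.graph.src e)
  have := R.graph.len_pos e
  linarith

open Classical in
/-- Descending from a fiber point over the top of an edge, with an extra `M` cost when
the top is a merging vertex. -/
lemma desc_from_top [CompactSpace X] (hX : IsGeodesicSpace X) {e : R.graph.E} {t : ℝ}
    (ht : t ∈ Set.Ico 0 (R.graph.len e)) {x : X} (hx : R.π x = R.graph.tgt e) :
    ∃ y, R.π y = R.graph.param e t ∧ dist x y ≤ (R.graph.len e - t) +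
      (if R.IsMergingVertex (R.graph.tgt e) then R.fiberDiamSup else 0) := by
  by_cases hmg : R.IsMergingVertex (R.graph.tgt e)
  · obtain ⟨z, y, hz, hy, hd⟩ := limit_pair R hX ht
    refine ⟨y, hy, ?_⟩
    rw [if_pos hmg]
    calc dist x y ≤ dist x z + dist z y := dist_triangle _ _ _
      _ ≤ R.fiberDiamSup + (R.graph.len e - t) :=
          add_le_add (dist_le_Msup R (by rw [hx, hz])) hd
      _ = (R.graph.len e - t) + R.fiberDiamSup := by ring
  · have hvpos : 0 < dist r x := by
      rw [← R.dStar_π x, hx]; exact dStar_tgt_pos R e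
    have hη : (0:ℝ) < R.graph.len e - t := by linarith [ht.2]
    obtain ⟨f, hf, w, hw, hwη, y₁, hy₁, hdy₁⟩ :=
      exists_down_edge R hX (tgt_not_interior R e) hx hvpos hη
    have hfe : f = e := by
      by_contra hne
      exact hmg ⟨f, e, hne, hf, rfl⟩
    subst hfe
    have htw : t ≤ w := by linarith [hwη]
    obtain ⟨y, hy, hdy⟩ := desc_interior R hX hw hy₁ ⟨ht.1, htw⟩
    refine ⟨y, hy, ?_⟩
    rw [if_neg hmg]
    calc dist x y ≤ dist x y₁ + dist y₁ y := dist_triangle _ _ _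
      _ ≤ (R.graph.len f - w) + (w - t) := by rw [hdy₁]; exact add_le_add (le_refl _) hdy
      _ = (R.graph.len f - t) + 0 := by ring

/-- Every vertex other than the image of the root is the target of some edge. -/
lemma exists_tgt_of_vertex (hX : IsGeodesicSpace X) {v : G}
    (hvert : ∃ e, v = R.graph.src e ∨ v = R.graph.tgt e) (hv : v ≠ R.π r) :
    ∃ f, R.graph.tgt f = v := by
  obtain ⟨x, hx⟩ := R.surj v
  have hpos : 0 < dist r x := by
    rcases eq_or_lt_of_le (dist_nonneg (x := r) (y := x)) with h0 | h0
    · exfalso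
      have hxr : r = x := dist_eq_zero.1 h0.symm
      rw [← hxr] at hx
      exact hv hx.symm
    · exact h0
  obtain ⟨f, hf, _⟩ := exists_down_edge R hX (vertex_not_interior R hvert) hx hpos one_pos
  exact ⟨f, hf⟩

end FromTop

end ReebAux
namespace ReebAux

variable {X : Type*} [MetricSpace X] {r : X} {G : Type*} [MetricSpace G]

/-- A step of a walk in the graph: an edge together with start and end parameters. -/
structure Stp (R : ReebGraphOf X r G) where
  e : R.graph.E
  a : ℝ
  b : ℝ

namespace Stp

variable {R : ReebGraphOf X r G}

def valid (st : Stp R) : Prop :=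
  st.a ∈ Set.Icc 0 (R.graph.len st.e) ∧ st.b ∈ Set.Icc 0 (R.graph.len st.e)

def beg (st : Stp R) : G := R.graph.param st.e st.a

def fin (st : Stp R) : G := R.graph.param st.e st.b

def slen (st : Stp R) : ℝ := |st.a - st.b|

def rev (st : Stp R) : Stp R := ⟨st.e, st.b, st.a⟩

open Classical in
/-- charge of an ascending step ending at the (merging) top of its edge -/
noncomputable def rf (st : Stp R) : ℕ :=
  if st.a < st.b ∧ st.b = R.graph.len st.e ∧ R.IsMergingVertex (R.graph.tgt st.e) then 1 else 0

open Classical in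
/-- charge of a descending step starting at the (merging) top of its edge -/
noncomputable def df (st : Stp R) : ℕ :=
  if st.b < st.a ∧ st.a = R.graph.len st.e ∧ R.IsMergingVertex (R.graph.tgt st.e) then 1 else 0

@[simp] lemma rev_beg (st : Stp R) : st.rev.beg = st.fin := rfl
@[simp] lemma rev_fin (st : Stp R) : st.rev.fin = st.beg := rfl
@[simp] lemma rev_slen (st : Stp R) : st.rev.slen = st.slen := abs_sub_comm _ _
@[simp] lemma rev_valid (st : Stp R) : st.rev.valid ↔ st.valid := and_comm
@[simp] lemma rev_df (st : Stp R) : st.rev.df = st.rf := rfl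

lemma slen_nonneg (st : Stp R) : 0 ≤ st.slen := abs_nonneg _

end Stp

/-- Valid walks in the graph from `p` to `q`. -/
inductive IsWalk (R : ReebGraphOf X r G) : G → G → List (Stp R) → Prop
  | nil (p : G) : IsWalk R p p []
  | cons {st : Stp R} {W : List (Stp R)} {q : G} (hv : st.valid)
      (h : IsWalk R st.fin q W) : IsWalk R st.beg q (st :: W)

section WalkBasic

variable {R : ReebGraphOf X r G}

/-- total length of a walk -/
noncomputable def wlen (W : List (Stp R)) : ℝ := (W.map Stp.slen).sum

/-- total descending charge -/
noncomputable def dchg (W : List (Stp R)) : ℕ := (W.map Stp.df).sum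

/-- total ascending (reversed) charge -/
noncomputable def cfl (W : List (Stp R)) : ℕ := (W.map Stp.rf).sum

/-- the points visited by a walk -/
def walkPts (p : G) (W : List (Stp R)) : List G := p :: W.map Stp.fin

open Classical in
/-- the total lifting charge of a walk. The boolean records whether we are inside an
ascending run. -/
noncomputable def kap : Bool → List (Stp R) → ℕ
  | _, [] => 0
  | b, st :: W =>
    if st.a < st.b then (if b then 0 else 1) + st.rf + kap true W
    else (if b then 0 else st.df) + kap false W

@[simp] lemma wlen_nil : wlen ([] : List (Stp R)) = 0 := rfl
@[simp] lemma wlen_cons (st : Stp R) (W : List (Stp R)) :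
    wlen (st :: W) = st.slen + wlen W := by simp [wlen]
lemma wlen_append (W₁ W₂ : List (Stp R)) : wlen (W₁ ++ W₂) = wlen W₁ + wlen W₂ := by
  simp [wlen]
lemma wlen_nonneg (W : List (Stp R)) : 0 ≤ wlen W := by
  induction W with
  | nil => simp
  | cons st W ih => rw [wlen_cons]; have := st.slen_nonneg; linarith

@[simp] lemma dchg_nil : dchg ([] : List (Stp R)) = 0 := rfl
@[simp] lemma dchg_cons (st : Stp R) (W : List (Stp R)) :
    dchg (st :: W) = st.df + dchg W := by simp [dchg]
@[simp] lemma cfl_nil : cfl ([] : List (Stp R)) = 0 := rfl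
@[simp] lemma cfl_cons (st : Stp R) (W : List (Stp R)) :
    cfl (st :: W) = st.rf + cfl W := by simp [cfl]
lemma cfl_append (W₁ W₂ : List (Stp R)) : cfl (W₁ ++ W₂) = cfl W₁ + cfl W₂ := by
  simp [cfl]

lemma wlen_rev (W : List (Stp R)) : wlen ((W.map Stp.rev).reverse) = wlen W := by
  induction W with
  | nil => simp [wlen]
  | cons st W ih =>
    simp only [List.map_cons, List.reverse_cons, wlen_append, ih, wlen_cons]
    simp [wlen, Stp.rev_slen]
    ring

lemma dchg_append (W₁ W₂ : List (Stp R)) : dchg (W₁ ++ W₂) = dchg W₁ + dchg W₂ := by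
  simp [dchg]

lemma dchg_rev (W : List (Stp R)) : dchg ((W.map Stp.rev).reverse) = cfl W := by
  induction W with
  | nil => simp [dchg, cfl]
  | cons st W ih =>
    simp only [List.map_cons, List.reverse_cons, dchg_append, ih, dchg_cons, cfl_cons]
    simp [dchg, Stp.rev_df]
    omega

lemma IsWalk.endpoints {p q : G} (h : IsWalk R p q []) : p = q := by
  cases h; rfl

lemma IsWalk.cons' {p q : G} {st : Stp R} {W : List (Stp R)} (hp : p = st.beg)
    (hv : st.valid) (h : IsWalk R st.fin q W) : IsWalk R p q (st :: W) := by
  rw [hp]; exact IsWalk.cons hv h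

lemma IsWalk.append {p q s : G} {W₁ W₂ : List (Stp R)} (h₁ : IsWalk R p q W₁)
    (h₂ : IsWalk R q s W₂) : IsWalk R p s (W₁ ++ W₂) := by
  induction h₁ with
  | nil => exact h₂
  | cons hv h ih => exact IsWalk.cons hv (ih h₂)

lemma IsWalk.split {p s : G} {W₁ W₂ : List (Stp R)} (h : IsWalk R p s (W₁ ++ W₂)) :
    ∃ q, IsWalk R p q W₁ ∧ IsWalk R q s W₂ := by
  induction W₁ generalizing p with
  | nil => exact ⟨p, IsWalk.nil p, h⟩
  | cons st W₁ ih =>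
    cases h with
    | cons hv h' =>
      obtain ⟨q, h1, h2⟩ := ih h'
      exact ⟨q, IsWalk.cons hv h1, h2⟩

lemma IsWalk.single {st : Stp R} (hv : st.valid) : IsWalk R st.beg st.fin [st] :=
  IsWalk.cons hv (IsWalk.nil st.fin)

lemma IsWalk.rev {p q : G} {W : List (Stp R)} (h : IsWalk R p q W) :
    IsWalk R q p ((W.map Stp.rev).reverse) := by
  induction h with
  | nil p => exact IsWalk.nil p
  | @cons st W q hv h ih =>
    simp only [List.map_cons, List.reverse_cons]
    refine ih.append ?_
    exact IsWalk.cons' (by simp) (by simp [hv]) (by simpa using IsWalk.nil st.beg)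

end WalkBasic

end ReebAux
namespace ReebAux

variable {X : Type*} [MetricSpace X] {r : X} {G : Type*} [MetricSpace G]

section WalkMetric

variable (R : ReebGraphOf X r G) [ConnectedSpace X]

lemma exists_walk (p q : G) : ∃ W, IsWalk R p q W := by
  haveI : ConnectedSpace G := R.surj.connectedSpace R.continuous_π
  set C := {q' | ∃ W, IsWalk R p q' W} with hC
  have hopen : IsOpen C := by
    rw [Metric.isOpen_iff]
    rintro q' ⟨W, hW⟩
    obtain ⟨ε, hε, hball⟩ := exists_ball_edge R q'
    refine ⟨ε, hε, fun y hy => ?_⟩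
    obtain ⟨f, w, hw, hfw⟩ := R.graph.cover y
    have hyball : dist q' y < ε := by rw [dist_comm]; exact Metric.mem_ball.1 hy
    obtain ⟨σ, hσ, hfσ⟩ := hball y hyball f ⟨w, hw, hfw⟩
    have hstep := IsWalk.single (R := R) (st := ⟨f, σ, w⟩) ⟨hσ, hw⟩
    have hbeg : Stp.beg (R := R) ⟨f, σ, w⟩ = q' := hfσ
    have hfin : Stp.fin (R := R) ⟨f, σ, w⟩ = y := hfw
    rw [hbeg, hfin] at hstep
    exact ⟨W ++ [⟨f, σ, w⟩], hW.append hstep⟩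
  have hclosed : IsClosed C := by
    rw [← isOpen_compl_iff, Metric.isOpen_iff]
    intro q' hq'
    obtain ⟨ε, hε, hball⟩ := exists_ball_edge R q'
    refine ⟨ε, hε, fun y hy => ?_⟩
    intro hyC
    obtain ⟨W, hW⟩ := hyC
    apply hq'
    obtain ⟨f, w, hw, hfw⟩ := R.graph.cover y
    have hyball : dist q' y < ε := by rw [dist_comm]; exact Metric.mem_ball.1 hy
    obtain ⟨σ, hσ, hfσ⟩ := hball y hyball f ⟨w, hw, hfw⟩
    have hstep := IsWalk.single (R := R) (st := ⟨f, w, σ⟩) ⟨hw, hσ⟩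
    have hbeg : Stp.beg (R := R) ⟨f, w, σ⟩ = y := hfw
    have hfin : Stp.fin (R := R) ⟨f, w, σ⟩ = q' := hfσ
    rw [hbeg, hfin] at hstep
    exact ⟨W ++ [⟨f, w, σ⟩], hW.append hstep⟩
  have huniv : C = Set.univ := by
    rcases isClopen_iff.1 ⟨hclosed, hopen⟩ with h | h
    · exfalso
      have : p ∈ C := ⟨[], IsWalk.nil p⟩
      rw [h] at this
      exact this
    · exact h
  have : q ∈ C := by rw [huniv]; trivial
  exact this

/-- The walk-length (quotient) metric on `G`. -/
noncomputable def wdist (p q : G) : ℝ := sInf {L | ∃ W, IsWalk R p q W ∧ wlen W = L}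

lemma wdist_set_nonempty (p q : G) : {L | ∃ W, IsWalk R p q W ∧ wlen W = L}.Nonempty := by
  obtain ⟨W, hW⟩ := exists_walk R p q
  exact ⟨wlen W, W, hW, rfl⟩

lemma wdist_set_bdd (p q : G) : BddBelow {L | ∃ W, IsWalk R p q W ∧ wlen W = L} := by
  refine ⟨0, ?_⟩
  rintro L ⟨W, _, rfl⟩
  exact wlen_nonneg W

lemma wdist_le {p q : G} {W : List (Stp R)} (hW : IsWalk R p q W) :
    wdist R p q ≤ wlen W := csInf_le (wdist_set_bdd R p q) ⟨W, hW, rfl⟩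

lemma wdist_nonneg (p q : G) : 0 ≤ wdist R p q :=
  le_csInf (wdist_set_nonempty R p q) (by rintro L ⟨W, _, rfl⟩; exact wlen_nonneg W)

lemma wdist_self (p : G) : wdist R p p = 0 :=
  le_antisymm (by simpa using wdist_le R (IsWalk.nil p)) (wdist_nonneg R p p)

lemma wdist_symm (p q : G) : wdist R p q = wdist R q p := by
  unfold wdist
  congr 1
  ext L
  constructor
  · rintro ⟨W, hW, rfl⟩
    exact ⟨(W.map Stp.rev).reverse, hW.rev, wlen_rev W⟩
  · rintro ⟨W, hW, rfl⟩
    exact ⟨(W.map Stp.rev).reverse, hW.rev, wlen_rev W⟩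

lemma lt_wdist_add (p q : G) {ε : ℝ} (hε : 0 < ε) :
    ∃ W, IsWalk R p q W ∧ wlen W < wdist R p q + ε := by
  obtain ⟨L, ⟨W, hW, rfl⟩, hl⟩ := Real.lt_sInf_add_pos (wdist_set_nonempty R p q) hε
  exact ⟨W, hW, hl⟩

lemma wdist_triangle (p q s : G) : wdist R p s ≤ wdist R p q + wdist R q s := by
  refine le_of_forall_pos_le_add fun ε hε => ?_
  obtain ⟨W₁, hW₁, hl₁⟩ := lt_wdist_add R p q (half_pos hε)
  obtain ⟨W₂, hW₂, hl₂⟩ := lt_wdist_add R q s (half_pos hε)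
  have := wdist_le R (hW₁.append hW₂)
  rw [wlen_append] at this
  linarith

lemma wdist_le_dist (p q : G) : wdist R p q ≤ dist p q := by
  refine R.graph.dist_maximal (wdist R) (wdist_self R) (wdist_symm R) (wdist_triangle R)
    ?_ p q
  intro e s hs t ht
  have hstep := IsWalk.single (R := R) (st := ⟨e, s, t⟩) ⟨hs, ht⟩
  have := wdist_le R hstep
  simpa [Stp.beg, Stp.fin, Stp.slen, wlen] using this

lemma exists_walk_lt {p q : G} {ε : ℝ} (hε : 0 < ε) :
    ∃ W, IsWalk R p q W ∧ wlen W < dist p q + ε := by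
  obtain ⟨W, hW, hl⟩ := lt_wdist_add R p q hε
  have := wdist_le_dist R p q
  exact ⟨W, hW, by linarith⟩

end WalkMetric

end ReebAux
namespace ReebAux

variable {X : Type*} [MetricSpace X] {r : X} {G : Type*} [MetricSpace G]

section Lifting

variable (R : ReebGraphOf X r G)

lemma desc_lift [CompactSpace X] (hX : IsGeodesicSpace X) :
    ∀ (D : List (Stp R)) (g₁ g₀ : G), IsWalk R g₁ g₀ D → (∀ st ∈ D, st.b ≤ st.a) →
    ∀ z, R.π z = g₁ →
    ∃ w, R.π w = g₀ ∧ dist z w ≤ wlen D + R.fiberDiamSup * dchg D := by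
  intro D
  induction D with
  | nil =>
    intro g₁ g₀ hW hdesc z hz
    cases hW
    exact ⟨z, hz, by simp [dchg]⟩
  | cons st D ih =>
    intro g₁ g₀ hW hdesc z hz
    haveI : Nonempty X := ⟨z⟩
    have hM0 : 0 ≤ R.fiberDiamSup := Msup_nonneg R
    cases hW with
    | cons hv h' =>
      have hba : st.b ≤ st.a := hdesc st List.mem_cons_self
      have hstep : ∃ y, R.π y = st.fin ∧
          dist z y ≤ st.slen + R.fiberDiamSup * st.df := by
        rcases eq_or_lt_of_le hba with heq | hlt
        · refine ⟨z, ?_, ?_⟩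
          · rw [hz]; unfold Stp.beg Stp.fin; rw [heq]
          · have h1 : st.slen = 0 := by unfold Stp.slen; rw [heq]; simp
            have h2 : (0:ℝ) ≤ R.fiberDiamSup * st.df :=
              mul_nonneg hM0 (Nat.cast_nonneg _)
            simp [h1]
            positivity
        · rcases eq_or_lt_of_le hv.1.2 with halen | halen
          · -- from the top of the edge
            have hz' : R.π z = R.graph.tgt st.e := by
              rw [hz]; unfold Stp.beg MetricGraphStruct.tgt; rw [halen]
            obtain ⟨y, hy, hdy⟩ := desc_from_top R hX
              (t := st.b) ⟨hv.2.1, lt_of_lt_of_le hlt hv.1.2⟩ hz'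
            refine ⟨y, hy, ?_⟩
            have hslen : st.slen = st.a - st.b := by
              unfold Stp.slen; rw [abs_of_pos (by linarith)]
            by_cases hmg : R.IsMergingVertex (R.graph.tgt st.e)
            · have hdf : st.df = 1 := by unfold Stp.df; rw [if_pos ⟨hlt, halen, hmg⟩]
              rw [if_pos hmg] at hdy
              rw [hdf, hslen]
              push_cast
              rw [← halen] at hdy
              linarith
            · have hdf : st.df = 0 := by
                unfold Stp.df
                rw [if_neg (by tauto)]
              rw [if_neg hmg] at hdy
              rw [hdf, hslen]
              push_cast
              rw [← halen] at hdy
              linarith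
          · -- interior start
            have h0a : 0 < st.a := lt_of_le_of_lt hv.2.1 hlt
            obtain ⟨y, hy, hdy⟩ := desc_interior R hX (t' := st.a) ⟨h0a, halen⟩
              (show R.π z = R.graph.param st.e st.a from hz) (t := st.b) ⟨hv.2.1, hlt.le⟩
            refine ⟨y, hy, ?_⟩
            have hdf : st.df = 0 := by
              unfold Stp.df
              rw [if_neg (by rintro ⟨_, h, _⟩; exact absurd h (ne_of_lt halen))]
            have hslen : st.slen = st.a - st.b := by
              unfold Stp.slen; rw [abs_of_pos (by linarith)]
            rw [hdf, hslen]
            push_cast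
            linarith
      obtain ⟨y, hy, hdy⟩ := hstep
      obtain ⟨w, hw, hdw⟩ := ih st.fin g₀ h'
        (fun s hs => hdesc s (List.mem_cons_of_mem st hs)) y hy
      refine ⟨w, hw, ?_⟩
      rw [wlen_cons, dchg_cons]
      push_cast
      calc dist z w ≤ dist z y + dist y w := dist_triangle _ _ _
        _ ≤ st.slen + R.fiberDiamSup * st.df + (wlen D + R.fiberDiamSup * dchg D) :=
            add_le_add hdy hdw
        _ = st.slen + wlen D + R.fiberDiamSup * (st.df + dchg D) := by ring

lemma asc_lift [CompactSpace X] (hX : IsGeodesicSpace X) {A : List (Stp R)} {p m : G}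
    (hW : IsWalk R p m A) (hasc : ∀ st ∈ A, st.a ≤ st.b) {u z : X}
    (hu : R.π u = p) (hz : R.π z = m) :
    dist u z ≤ wlen A + R.fiberDiamSup * (1 + cfl A) := by
  have hrev : IsWalk R m p ((A.map Stp.rev).reverse) := hW.rev
  have hdesc : ∀ st ∈ (A.map Stp.rev).reverse, st.b ≤ st.a := by
    intro st hst
    rw [List.mem_reverse, List.mem_map] at hst
    obtain ⟨st', hst', rfl⟩ := hst
    exact hasc st' hst'
  obtain ⟨w, hw, hd⟩ := desc_lift R hX _ m p hrev hdesc z hz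
  rw [wlen_rev, dchg_rev] at hd
  have hfib : dist u w ≤ R.fiberDiamSup := dist_le_Msup R (by rw [hu, hw])
  calc dist u z ≤ dist u w + dist w z := dist_triangle _ _ _
    _ ≤ R.fiberDiamSup + (wlen A + R.fiberDiamSup * cfl A) := by
        rw [dist_comm w z]; exact add_le_add hfib hd
    _ = wlen A + R.fiberDiamSup * (1 + cfl A) := by push_cast; ring

end Lifting

section Split

variable {R : ReebGraphOf X r G}

open Classical in
/-- split a walk into its maximal ascending prefix and the rest -/
noncomputable def splitA : List (Stp R) → List (Stp R) × List (Stp R)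
  | [] => ([], [])
  | st :: W => if st.a < st.b then (st :: (splitA W).1, (splitA W).2) else ([], st :: W)

lemma splitA_append : ∀ W : List (Stp R), (splitA W).1 ++ (splitA W).2 = W := by
  intro W
  induction W with
  | nil => simp [splitA]
  | cons st W ih =>
    by_cases h : st.a < st.b
    · simp [splitA, if_pos h, ih]
    · simp [splitA, if_neg h]

lemma splitA_asc : ∀ W : List (Stp R), ∀ st ∈ (splitA W).1, st.a < st.b := by
  intro W
  induction W with
  | nil => simp [splitA]
  | cons st W ih =>
    by_cases h : st.a < st.b
    · simp only [splitA, if_pos h]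
      intro s hs
      rcases List.mem_cons.1 hs with rfl | hs
      · exact h
      · exact ih s hs
    · simp [splitA, if_neg h]

lemma splitA_snd : ∀ W : List (Stp R), (splitA W).2 = [] ∨
    ∃ st B, (splitA W).2 = st :: B ∧ ¬ st.a < st.b := by
  intro W
  induction W with
  | nil => left; simp [splitA]
  | cons st W ih =>
    by_cases h : st.a < st.b
    · simpa [splitA, if_pos h] using ih
    · right; exact ⟨st, W, by simp [splitA, if_neg h], h⟩

lemma splitA_snd_len : ∀ W : List (Stp R), (splitA W).2.length ≤ W.length := by
  intro W
  induction W with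
  | nil => simp [splitA]
  | cons st W ih =>
    by_cases h : st.a < st.b
    · simp only [splitA, if_pos h]
      exact le_trans ih (by simp)
    · simp [splitA, if_neg h]

open Classical in
lemma kap_nil (b : Bool) : kap (R := R) b [] = 0 := rfl

open Classical in
lemma kap_cons_asc (b : Bool) (st : Stp R) (W : List (Stp R)) (h : st.a < st.b) :
    kap b (st :: W) = (if b then 0 else 1) + st.rf + kap true W := by
  simp [kap, if_pos h]

open Classical in
lemma kap_cons_nasc (b : Bool) (st : Stp R) (W : List (Stp R)) (h : ¬ st.a < st.b) :
    kap b (st :: W) = (if b then 0 else st.df) + kap false W := by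
  simp [kap, if_neg h]

lemma kap_true_asc_append (A B : List (Stp R)) (h : ∀ st ∈ A, st.a < st.b) :
    kap true (A ++ B) = cfl A + kap true B := by
  induction A with
  | nil => simp [cfl]
  | cons st A ih =>
    rw [List.cons_append, kap_cons_asc true st _ (h st List.mem_cons_self), cfl_cons,
      ih (fun s hs => h s (List.mem_cons_of_mem _ hs))]
    simp
    omega

lemma kap_false_asc_append (A B : List (Stp R)) (hA : A ≠ []) (h : ∀ st ∈ A, st.a < st.b) :
    kap false (A ++ B) = 1 + cfl A + kap true B := by
  cases A with
  | nil => exact absurd rfl hA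
  | cons st A =>
    rw [List.cons_append, kap_cons_asc false st _ (h st List.mem_cons_self), cfl_cons,
      kap_true_asc_append A B (fun s hs => h s (List.mem_cons_of_mem _ hs))]
    simp
    omega

end Split

section MainLift

variable (R : ReebGraphOf X r G)

lemma main_lift [CompactSpace X] (hX : IsGeodesicSpace X) :
    ∀ (n : ℕ) (W : List (Stp R)) (p q : G) (u : X), W.length ≤ n → IsWalk R p q W →
      R.π u = p →
      ∃ w, R.π w = q ∧ dist u w ≤ wlen W + R.fiberDiamSup * kap false W := by
  intro n
  induction n with
  | zero =>
    intro W p q u hlen hW hu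
    have hWnil : W = [] := List.eq_nil_of_length_eq_zero (Nat.le_zero.1 hlen)
    subst hWnil
    cases hW
    exact ⟨u, hu, by simp [kap_nil]⟩
  | succ n ih =>
    intro W p q u hlen hW hu
    haveI : Nonempty X := ⟨u⟩
    have hM0 : 0 ≤ R.fiberDiamSup := Msup_nonneg R
    cases W with
    | nil =>
      cases hW
      exact ⟨u, hu, by simp [kap_nil]⟩
    | cons st W' =>
      by_cases hasc : st.a < st.b
      · -- ascending run at the head
        have hWAB : st :: W' = (st :: (splitA W').1) ++ (splitA W').2 := by
          simp [splitA_append W']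
        set A := st :: (splitA W').1 with hA
        set B := (splitA W').2 with hB
        rw [hWAB] at hW
        obtain ⟨mm, hwalkA, hwalkB⟩ := hW.split
        have hAasc : ∀ s ∈ A, s.a < s.b := by
          intro s hs
          rcases List.mem_cons.1 hs with rfl | hs
          · exact hasc
          · exact splitA_asc W' s hs
        have hAasc' : ∀ s ∈ A, s.a ≤ s.b := fun s hs => (hAasc s hs).le
        have hkap : kap false (A ++ B) = 1 + cfl A + kap true B :=
          kap_false_asc_append A B (by simp [hA]) hAasc
        rcases splitA_snd W' with hBnil | ⟨st₂, B', hBeq, hst₂⟩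
        · -- the walk is a single ascending run
          rw [← hB] at hBnil
          rw [hBnil] at hwalkB
          have hmq : mm = q := hwalkB.endpoints
          subst hmq
          obtain ⟨z, hz⟩ := R.surj mm
          have hbound := asc_lift R hX hwalkA hAasc' hu hz
          refine ⟨z, hz, ?_⟩
          rw [hWAB, hBnil, List.append_nil]
          rw [hBnil] at hkap
          rw [List.append_nil] at hkap
          rw [hkap, kap_nil]
          push_cast
          push_cast at hbound
          linarith
        · -- an ascending run followed by a non-ascending step
          rw [← hB] at hBeq
          rw [hBeq] at hwalkB
          cases hwalkB with
          | @cons _ _ _ hv₂ hwalkB' =>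
            -- produce the top pair (z, y)
            have hzy : ∃ z y, R.π z = st₂.beg ∧ R.π y = st₂.fin ∧
                dist z y ≤ st₂.slen := by
              have hba : st₂.b ≤ st₂.a := not_lt.1 hst₂
              rcases eq_or_lt_of_le hba with heq | hlt
              · obtain ⟨z, hz⟩ := R.surj st₂.beg
                refine ⟨z, z, hz, ?_, by simp [Stp.slen_nonneg]⟩
                rw [hz]; unfold Stp.beg Stp.fin; rw [heq]
              · rcases eq_or_lt_of_le hv₂.1.2 with halen | halen
                · obtain ⟨z, y, hz, hy, hd⟩ := limit_pair R hX
                    (t := st₂.b) ⟨hv₂.2.1, lt_of_lt_of_le hlt hv₂.1.2⟩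
                  refine ⟨z, y, ?_, hy, ?_⟩
                  · rw [hz]; unfold MetricGraphStruct.tgt Stp.beg; rw [halen]
                  · have hsl : st₂.slen = st₂.a - st₂.b := by
                      unfold Stp.slen; rw [abs_of_pos (by linarith)]
                    rw [hsl]
                    rw [← halen] at hd
                    linarith
                · obtain ⟨z, hz⟩ := R.surj st₂.beg
                  have h0a : 0 < st₂.a := lt_of_le_of_lt hv₂.2.1 hlt
                  obtain ⟨y, hy, hd⟩ := desc_interior R hX (t' := st₂.a) ⟨h0a, halen⟩
                    (show R.π z = R.graph.param st₂.e st₂.a from hz) (t := st₂.b) ⟨hv₂.2.1, hlt.le⟩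
                  refine ⟨z, y, hz, hy, ?_⟩
                  have : st₂.slen = st₂.a - st₂.b := by
                    unfold Stp.slen; rw [abs_of_pos (by linarith)]
                  linarith [hd]
            obtain ⟨z, y, hz, hy, hdzy⟩ := hzy
            have hascb := asc_lift R hX hwalkA hAasc' hu hz
            -- recurse on B'
            have hlenB' : B'.length ≤ n := by
              have h1 := splitA_snd_len W'
              rw [← hB, hBeq] at h1
              simp only [List.length_cons] at h1 hlen
              omega
            obtain ⟨w, hw, hdw⟩ := ih B' st₂.fin q y hlenB' hwalkB' hy
            refine ⟨w, hw, ?_⟩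
            rw [hWAB, hBeq]
            rw [hBeq] at hkap
            rw [hkap, kap_cons_nasc true st₂ B' hst₂]
            rw [wlen_append, wlen_cons]
            simp only [if_true]
            push_cast
            calc dist u w ≤ dist u z + dist z w := dist_triangle _ _ _
              _ ≤ dist u z + (dist z y + dist y w) := by
                  linarith [dist_triangle z y w]
              _ ≤ (wlen A + R.fiberDiamSup * (1 + cfl A)) + (st₂.slen +
                  (wlen B' + R.fiberDiamSup * kap false B')) := by
                  push_cast at hascb
                  linarith
              _ = wlen A + (st₂.slen + wlen B') +
                  R.fiberDiamSup * (1 + cfl A + (0 + kap false B')) := by push_cast; ring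
      · -- non-ascending first step: use desc_lift on the single step
        cases hW with
        | cons hv h' =>
          have hδ : ∀ s ∈ [st], s.b ≤ s.a := by
            intro s hs
            rw [List.mem_singleton] at hs
            subst hs
            exact not_lt.1 hasc
          obtain ⟨y, hy, hdy⟩ := desc_lift R hX [st] st.beg st.fin
            (IsWalk.single hv) hδ u hu
          have hlen' : W'.length ≤ n := by
            simp only [List.length_cons] at hlen
            omega
          obtain ⟨w, hw, hdw⟩ := ih W' st.fin q y hlen' h' hy
          refine ⟨w, hw, ?_⟩
          rw [kap_cons_nasc false st W' hasc, wlen_cons]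
          simp only [Bool.false_eq_true, if_false]
          have hws : wlen [st] = st.slen := by simp
          have hds : dchg [st] = st.df := by simp
          rw [hws, hds] at hdy
          push_cast
          calc dist u w ≤ dist u y + dist y w := dist_triangle _ _ _
            _ ≤ (st.slen + R.fiberDiamSup * st.df) +
                (wlen W' + R.fiberDiamSup * kap false W') := add_le_add hdy hdw
            _ = st.slen + wlen W' + R.fiberDiamSup * (st.df + kap false W') := by ring

end MainLift

end ReebAux
namespace ReebAux

variable {X : Type*} [MetricSpace X] {r : X} {G : Type*} [MetricSpace G]

section Counting

variable {R : ReebGraphOf X r G}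

open Classical in
noncomputable def flg : Bool → List (Stp R) → ℕ
  | _, [] => 0
  | b, st :: W =>
    if st.a < st.b then st.rf + flg true W else (if b then 0 else st.df) + flg false W

open Classical in
noncomputable def rns : Bool → List (Stp R) → ℕ
  | _, [] => 0
  | b, st :: W => if st.a < st.b then (if b then 0 else 1) + rns true W else rns false W

open Classical in
noncomputable def lmc : List (Stp R) → ℕ
  | [] => 0
  | [_] => 0
  | st :: st' :: W => (if st.a < st.b ∧ ¬st'.a < st'.b then 1 else 0) + lmc (st' :: W)

variable (R) in
open Classical in
noncomputable def mcount : List G → ℕ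
  | [] => 0
  | v :: l => (if R.IsMergingVertex v then 1 else 0) + mcount l

lemma kap_eq_flg_rns : ∀ (b : Bool) (W : List (Stp R)), kap b W = flg b W + rns b W := by
  intro b W
  induction W generalizing b with
  | nil => simp [kap, flg, rns]
  | cons st W ih =>
    by_cases h : st.a < st.b
    · simp only [kap, flg, rns, if_pos h, ih true]
      omega
    · simp only [kap, flg, rns, if_neg h, ih false]
      omega

lemma IsWalk.inv {p q : G} {st : Stp R} {W : List (Stp R)} (h : IsWalk R p q (st :: W)) :
    p = st.beg ∧ st.valid ∧ IsWalk R st.fin q W := by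
  cases h with
  | cons hv h' => exact ⟨rfl, hv, h'⟩

lemma rf_one_merge {st : Stp R} (h : st.rf = 1) :
    R.IsMergingVertex st.fin := by
  unfold Stp.rf at h
  split_ifs at h with hc
  obtain ⟨_, hb, hmg⟩ := hc
  have : st.fin = R.graph.tgt st.e := by unfold Stp.fin MetricGraphStruct.tgt; rw [hb]
  rw [this]
  exact hmg

lemma df_one_merge {st : Stp R} (h : st.df = 1) :
    R.IsMergingVertex st.beg := by
  unfold Stp.df at h
  split_ifs at h with hc
  obtain ⟨_, ha, hmg⟩ := hc
  have : st.beg = R.graph.tgt st.e := by unfold Stp.beg MetricGraphStruct.tgt; rw [ha]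
  rw [this]
  exact hmg

lemma rf_le_one (st : Stp R) : st.rf ≤ 1 := by unfold Stp.rf; split_ifs <;> simp
lemma df_le_one (st : Stp R) : st.df ≤ 1 := by unfold Stp.df; split_ifs <;> simp

open Classical in
lemma mcount_cons (v : G) (l : List G) :
    mcount R (v :: l) = (if R.IsMergingVertex v then 1 else 0) + mcount R l := rfl

open Classical in
lemma rf_le_mcount_head {st : Stp R} (l : List G) :
    st.rf + mcount R l ≤ mcount R (st.fin :: l) := by
  rw [mcount_cons]
  rcases Nat.le_one_iff_eq_zero_or_eq_one.1 (rf_le_one st) with h | h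
  · omega
  · rw [if_pos (rf_one_merge h)]
    omega

open Classical in
lemma df_le_mcount_head {st : Stp R} (l : List G) :
    st.df + mcount R l ≤ mcount R (st.beg :: l) := by
  rw [mcount_cons]
  rcases Nat.le_one_iff_eq_zero_or_eq_one.1 (df_le_one st) with h | h
  · omega
  · rw [if_pos (df_one_merge h)]
    omega

lemma mcount_le_cons (v : G) (l : List G) : mcount R l ≤ mcount R (v :: l) := by
  rw [mcount_cons]; omega

/-- flag charges are bounded by the number of merging points among walk points -/
lemma flg_le_mcount : ∀ (W : List (Stp R)) (p q : G), IsWalk R p q W →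
    flg true W ≤ mcount R (W.map Stp.fin) ∧
    flg false W ≤ mcount R (walkPts p W) := by
  intro W
  induction W with
  | nil =>
    intro p q _
    constructor
    · simp [flg, mcount]
    · simp [flg, walkPts, mcount]
  | cons st W ih =>
    intro p q hW
    obtain ⟨hp, hv, h'⟩ := hW.inv
    obtain ⟨ih1, ih2⟩ := ih st.fin q h'
    have hmap : (st :: W).map Stp.fin = st.fin :: W.map Stp.fin := rfl
    have hpts : walkPts p (st :: W) = p :: st.fin :: W.map Stp.fin := rfl
    have hpts' : walkPts st.fin W = st.fin :: W.map Stp.fin := rfl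
    by_cases h : st.a < st.b
    · constructor
      · simp only [flg, if_pos h, hmap]
        have := rf_le_mcount_head (R := R) (st := st) (W.map Stp.fin)
        omega
      · simp only [flg, if_pos h, hpts]
        have h1 := rf_le_mcount_head (R := R) (st := st) (W.map Stp.fin)
        have h2 := mcount_le_cons (R := R) p (st.fin :: W.map Stp.fin)
        omega
    · constructor
      · simp only [flg, if_neg h, hmap]
        rw [hpts'] at ih2
        have := mcount_le_cons (R := R) st.fin (W.map Stp.fin)
        simp only [if_true]
        omega
      · simp only [flg, if_neg h, hpts]
        rw [hpts'] at ih2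
        have h1 := df_le_mcount_head (R := R) (st := st) (st.fin :: W.map Stp.fin)
        rw [← hp] at h1
        simp only [Bool.false_eq_true, if_false]
        omega

lemma lmc_le_cons (st : Stp R) (W : List (Stp R)) : lmc W ≤ lmc (st :: W) := by
  cases W with
  | nil => simp [lmc]
  | cons st' T => simp only [lmc]; omega

lemma rns_le_lmc : ∀ (W : List (Stp R)),
    (rns false W ≤ lmc W + 1) ∧ (∀ st : Stp R, st.a < st.b → rns true W ≤ lmc (st :: W)) := by
  intro W
  induction W with
  | nil =>
    constructor
    · simp [rns]
    · intro st _; simp [rns, lmc]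
  | cons st' T ih =>
    obtain ⟨ih1, ih2⟩ := ih
    constructor
    · by_cases h : st'.a < st'.b
      · simp only [rns, if_pos h]
        have := ih2 st' h
        norm_num
        omega
      · simp only [rns, if_neg h]
        have := lmc_le_cons st' T
        omega
    · intro st hst
      by_cases h : st'.a < st'.b
      · simp only [rns, if_pos h]
        have h1 := ih2 st' h
        have h2 : lmc (st' :: T) ≤ lmc (st :: st' :: T) := by simp only [lmc]; omega
        norm_num
        omega
      · simp only [rns, if_neg h]
        have h1 := lmc_le_cons st' T
        have h2 : lmc (st :: st' :: T) = 1 + lmc (st' :: T) := by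
          simp only [lmc, if_pos (And.intro hst h)]
        omega

/-- at an ascending-to-descending junction, the top is a merging vertex -/
lemma junction_merge {st st' : Stp R} (hadj : st.fin = st'.beg) (hv : st.valid)
    (hv' : st'.valid) (hne : st.e ≠ st'.e) (ha : st.a < st.b) (hd : st'.b < st'.a) :
    st.rf = 1 := by
  have hb0 : 0 < st.b := lt_of_le_of_lt hv.1.1 ha
  have hblen : st.b = R.graph.len st.e := by
    rcases eq_or_lt_of_le hv.2.2 with h | h
    · exact h
    · exfalso
      exact hne (edge_eq_of_interior R ⟨hb0, h⟩ hv'.1 hadj)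
  have ha'0 : 0 < st'.a := lt_of_le_of_lt hv'.2.1 hd
  have halen : st'.a = R.graph.len st'.e := by
    rcases eq_or_lt_of_le hv'.1.2 with h | h
    · exact h
    · exfalso
      exact hne (edge_eq_of_interior R ⟨ha'0, h⟩ hv.2 hadj.symm).symm
  have htgt : R.graph.tgt st'.e = R.graph.tgt st.e := by
    unfold MetricGraphStruct.tgt
    rw [← hblen, ← halen]
    exact hadj.symm
  have hmg : R.IsMergingVertex (R.graph.tgt st.e) := ⟨st.e, st'.e, hne, rfl, htgt⟩
  unfold Stp.rf
  rw [if_pos ⟨ha, hblen, hmg⟩]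

lemma lmc_le_cfl : ∀ (W : List (Stp R)) (p q : G), IsWalk R p q W →
    W.Chain' (fun a b => a.e ≠ b.e) → (∀ st ∈ W, st.a ≠ st.b) → lmc W ≤ cfl W := by
  intro W
  induction W with
  | nil => intro p q _ _ _; simp [lmc, cfl]
  | cons st T ih =>
    intro p q hW hch hnd
    obtain ⟨hp, hv, h'⟩ := hW.inv
    cases T with
    | nil => simp [lmc, cfl]
    | cons st' T' =>
      obtain ⟨hp', hv', h''⟩ := h'.inv
      unfold List.Chain' at hch; rw [List.isChain_cons_cons] at hch
      have hch' := hch.2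
      have htail := ih st.fin q h' hch' (fun s hs => hnd s (List.mem_cons_of_mem _ hs))
      by_cases hc : st.a < st.b ∧ ¬st'.a < st'.b
      · have hd : st'.b < st'.a := by
          rcases lt_or_ge st'.b st'.a with h | h
          · exact h
          · exfalso
            rcases eq_or_lt_of_le h with heq | hlt
            · exact hnd st' (List.mem_cons_of_mem _ List.mem_cons_self) heq
            · exact hc.2 hlt
        have hrf := junction_merge hp' hv hv' hch.1 hc.1 hd
        have hlm : lmc (st :: st' :: T') = 1 + lmc (st' :: T') := by
          simp only [lmc, if_pos hc]
        rw [hlm, cfl_cons, hrf]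
        omega
      · have hlm : lmc (st :: st' :: T') = lmc (st' :: T') := by
          simp only [lmc, if_neg hc]
          omega
        rw [hlm, cfl_cons]
        omega

lemma cfl_le_flg : ∀ (b : Bool) (W : List (Stp R)), cfl W ≤ flg b W := by
  intro b W
  induction W generalizing b with
  | nil => simp [cfl, flg]
  | cons st T ih =>
    by_cases h : st.a < st.b
    · simp only [cfl_cons, flg, if_pos h]
      have := ih true
      omega
    · simp only [cfl_cons, flg, if_neg h]
      have h1 : st.rf = 0 := by
        unfold Stp.rf
        rw [if_neg (by tauto)]
      have := ih false
      omega

lemma nodeg_of_nodup : ∀ (W : List (Stp R)) (p q : G), IsWalk R p q W →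
    (walkPts p W).Nodup → ∀ st ∈ W, st.a ≠ st.b := by
  intro W
  induction W with
  | nil => intro p q _ _ st hst; exact absurd hst List.not_mem_nil
  | cons st' T ih =>
    intro p q hW hnd st hst
    obtain ⟨hp, hv, h'⟩ := hW.inv
    have hpts : walkPts p (st' :: T) = p :: walkPts st'.fin T := rfl
    rw [hpts, List.nodup_cons] at hnd
    rcases List.mem_cons.1 hst with rfl | hst
    · intro heq
      apply hnd.1
      have : st.fin = st.beg := by unfold Stp.beg Stp.fin; rw [heq]
      rw [hp, ← this]
      exact List.mem_cons_self
    · exact ih st'.fin q h' hnd.2 st hst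

/-- the full bound on the lifting charge of a good walk -/
lemma kap_le (W : List (Stp R)) (p q : G) (hW : IsWalk R p q W)
    (hnd : (walkPts p W).Nodup) (hch : W.Chain' (fun a b => a.e ≠ b.e)) :
    kap false W ≤ 2 * mcount R (walkPts p W) + 1 := by
  have h1 := kap_eq_flg_rns false W
  have h2 := (flg_le_mcount W p q hW).2
  have h3 := (rns_le_lmc W).1
  have h4 := lmc_le_cfl W p q hW hch (nodeg_of_nodup W p q hW hnd)
  have h5 := cfl_le_flg false W
  omega

/-- a `Nodup` list has at most `s.card` merging points if all its merging members lie
in `s` -/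
lemma mcount_le_card : ∀ (l : List G) (s : Finset G), l.Nodup →
    (∀ v ∈ l, R.IsMergingVertex v → v ∈ s) → mcount R l ≤ s.card := by
  classical
  intro l
  induction l with
  | nil => intro s _ _; simp [mcount]
  | cons v l ih =>
    intro s hnd hmem
    rw [List.nodup_cons] at hnd
    rw [mcount_cons]
    by_cases hmg : R.IsMergingVertex v
    · rw [if_pos hmg]
      have hvs : v ∈ s := hmem v List.mem_cons_self hmg
      have hsub := ih (s.erase v) hnd.2 ?_
      · have := Finset.card_erase_of_mem hvs
        have hpos : 1 ≤ s.card := Finset.card_pos.2 ⟨v, hvs⟩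
        omega
      · intro w hw hmgw
        refine Finset.mem_erase.2 ⟨?_, hmem w (List.mem_cons_of_mem _ hw) hmgw⟩
        rintro rfl
        exact hnd.1 hw
    · rw [if_neg hmg]
      have := ih s hnd.2 (fun w hw h => hmem w (List.mem_cons_of_mem _ hw) h)
      omega

end Counting

end ReebAux
namespace ReebAux

variable {X : Type*} [MetricSpace X] {r : X} {G : Type*} [MetricSpace G]

section Betti

variable (R : ReebGraphOf X r G)

open Classical in
noncomputable def mrgF : Finset G :=
  (Finset.univ.image R.graph.tgt).filter (fun v => R.IsMergingVertex v)

open Classical in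
lemma mem_mrgF {v : G} (h : R.IsMergingVertex v) : v ∈ mrgF R := by
  obtain ⟨e₁, e₂, hne, h1, h2⟩ := h
  exact Finset.mem_filter.2 ⟨Finset.mem_image.2 ⟨e₁, Finset.mem_univ _, h1⟩,
    ⟨e₁, e₂, hne, h1, h2⟩⟩

open Classical in
lemma betti_count (hX : IsGeodesicSpace X) : (mrgF R).card ≤ R.graph.betti1 := by
  classical
  set VF : Finset G := Finset.univ.image R.graph.src ∪ Finset.univ.image R.graph.tgt
    with hVF
  have hmemVF : ∀ e : R.graph.E, R.graph.tgt e ∈ VF := fun e =>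
    Finset.mem_union_right _ (Finset.mem_image.2 ⟨e, Finset.mem_univ _, rfl⟩)
  have h1 : Fintype.card R.graph.E =
      ∑ v ∈ VF, (Finset.univ.filter fun e => R.graph.tgt e = v).card := by
    rw [← Finset.card_univ]
    exact Finset.card_eq_sum_card_fiberwise (fun e _ => hmemVF e)
  have h2 : ∀ v ∈ VF, (if v = R.π r then 0 else 1) + (if R.IsMergingVertex v then 1 else 0)
      ≤ (Finset.univ.filter fun e => R.graph.tgt e = v).card := by
    intro v hv
    by_cases hmg : R.IsMergingVertex v
    · obtain ⟨e₁, e₂, hne, he₁, he₂⟩ := hmg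
      have hcard : 1 < (Finset.univ.filter fun e => R.graph.tgt e = v).card :=
        Finset.one_lt_card.2 ⟨e₁, Finset.mem_filter.2 ⟨Finset.mem_univ _, he₁⟩,
          e₂, Finset.mem_filter.2 ⟨Finset.mem_univ _, he₂⟩, hne⟩
      split_ifs <;> omega
    · by_cases hroot : v = R.π r
      · subst hroot
        rw [if_pos rfl, if_neg hmg]
        exact Nat.zero_le _
      · have hvert : ∃ e, v = R.graph.src e ∨ v = R.graph.tgt e := by
          rcases Finset.mem_union.1 hv with h | h
          · obtain ⟨e, _, he⟩ := Finset.mem_image.1 h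
            exact ⟨e, Or.inl he.symm⟩
          · obtain ⟨e, _, he⟩ := Finset.mem_image.1 h
            exact ⟨e, Or.inr he.symm⟩
        obtain ⟨f, hf⟩ := exists_tgt_of_vertex R hX hvert hroot
        have hcard : 0 < (Finset.univ.filter fun e => R.graph.tgt e = v).card :=
          Finset.card_pos.2 ⟨f, Finset.mem_filter.2 ⟨Finset.mem_univ _, hf⟩⟩
        split_ifs <;> omega
  have h3 : ∑ v ∈ VF, ((if v = R.π r then 0 else 1) +
      (if R.IsMergingVertex v then 1 else 0)) ≤ Fintype.card R.graph.E := by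
    rw [h1]
    exact Finset.sum_le_sum h2
  rw [Finset.sum_add_distrib] at h3
  have h4 : ∑ v ∈ VF, (if v = R.π r then 0 else 1) =
      (VF.filter fun v => ¬(v = R.π r)).card := by
    rw [Finset.card_filter]
    refine Finset.sum_congr rfl fun v _ => ?_
    by_cases h : v = R.π r <;> simp [h]
  have h5 : ∑ v ∈ VF, (if R.IsMergingVertex v then 1 else 0) =
      (VF.filter fun v => R.IsMergingVertex v).card := by
    rw [Finset.card_filter]
  have h6 : (VF.filter fun v => v = R.π r).card +
      (VF.filter fun v => ¬(v = R.π r)).card = VF.card :=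
    Finset.card_filter_add_card_filter_not _
  have h7 : (VF.filter fun v => v = R.π r).card ≤ 1 := by
    refine Finset.card_le_one.2 fun a ha b hb => ?_
    rw [(Finset.mem_filter.1 ha).2, (Finset.mem_filter.1 hb).2]
  have h8 : (mrgF R).card ≤ (VF.filter fun v => R.IsMergingVertex v).card := by
    refine Finset.card_le_card fun v hv => ?_
    have h := Finset.mem_filter.1 hv
    exact Finset.mem_filter.2 ⟨Finset.mem_union_right _ h.1, h.2⟩
  -- identify cards with Nat.card of vertexSet and E
  have hvs : R.graph.vertexSet = (VF : Set G) := by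
    ext v
    simp only [MetricGraphStruct.vertexSet, Set.mem_setOf_eq, hVF, Finset.coe_union,
      Set.mem_union, Finset.coe_image, Set.mem_image, Finset.mem_coe, Finset.coe_univ,
      Set.image_univ, Set.mem_range]
    constructor
    · rintro ⟨e, he | he⟩
      · exact Or.inl ⟨e, he.symm⟩
      · exact Or.inr ⟨e, he.symm⟩
    · rintro (⟨e, he⟩ | ⟨e, he⟩)
      · exact ⟨e, Or.inl he.symm⟩
      · exact ⟨e, Or.inr he.symm⟩
  have hvcard : Nat.card R.graph.vertexSet = VF.card := by
    rw [Nat.card_coe_set_eq, hvs, Set.ncard_coe_finset]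
  have hecard : Nat.card R.graph.E = Fintype.card R.graph.E := Nat.card_eq_fintype_card
  unfold MetricGraphStruct.betti1
  rw [hecard, hvcard]
  omega

end Betti

end ReebAux
namespace ReebAux

variable {X : Type*} [MetricSpace X] {r : X} {G : Type*} [MetricSpace G]

section Surgery

variable {R : ReebGraphOf X r G}

lemma walk_suffix : ∀ (W : List (Stp R)) (p q v : G), IsWalk R p q W →
    v ∈ walkPts p W →
    ∃ W', IsWalk R v q W' ∧ wlen W' ≤ wlen W ∧ W'.length ≤ W.length := by
  intro W
  induction W with
  | nil =>
    intro p q v hW hv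
    cases hW
    have : v = p := by simpa [walkPts] using hv
    subst this
    exact ⟨[], IsWalk.nil v, le_refl _, le_refl _⟩
  | cons st W ih =>
    intro p q v hW hv
    obtain ⟨hp, hva, h'⟩ := hW.inv
    have hpts : walkPts p (st :: W) = p :: walkPts st.fin W := rfl
    rw [hpts] at hv
    rcases List.mem_cons.1 hv with rfl | hv
    · exact ⟨st :: W, hW, le_refl _, le_refl _⟩
    · obtain ⟨W', h1, h2, h3⟩ := ih st.fin q v h' hv
      refine ⟨W', h1, ?_, ?_⟩
      · rw [wlen_cons]
        have := st.slen_nonneg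
        linarith
      · simp only [List.length_cons]
        omega

lemma shorter_of_dup : ∀ (W : List (Stp R)) (p q : G), IsWalk R p q W →
    ¬(walkPts p W).Nodup →
    ∃ W', IsWalk R p q W' ∧ wlen W' ≤ wlen W ∧ W'.length < W.length := by
  intro W
  induction W with
  | nil =>
    intro p q hW hnd
    exact absurd (by simp [walkPts]) hnd
  | cons st W ih =>
    intro p q hW hnd
    obtain ⟨hp, hv, h'⟩ := hW.inv
    have hpts : walkPts p (st :: W) = p :: walkPts st.fin W := rfl
    rw [hpts, List.nodup_cons] at hnd
    by_cases hmem : p ∈ walkPts st.fin W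
    · obtain ⟨W', h1, h2, h3⟩ := walk_suffix W st.fin q p h' hmem
      refine ⟨W', by rw [hp] at h1 ⊢; exact h1, ?_, ?_⟩
      · rw [wlen_cons]; have := st.slen_nonneg; linarith
      · simp only [List.length_cons]; omega
    · have hnd' : ¬(walkPts st.fin W).Nodup := by tauto
      obtain ⟨W', h1, h2, h3⟩ := ih st.fin q h' hnd'
      refine ⟨st :: W', IsWalk.cons' hp hv h1, ?_, ?_⟩
      · rw [wlen_cons, wlen_cons]; linarith
      · simp only [List.length_cons]; omega

lemma shorter_of_dupedge : ∀ (W : List (Stp R)) (p q : G), IsWalk R p q W →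
    ¬ W.Chain' (fun a b : Stp R => a.e ≠ b.e) →
    ∃ W', IsWalk R p q W' ∧ wlen W' ≤ wlen W ∧ W'.length < W.length := by
  intro W
  induction W with
  | nil => intro p q _ hc; exact absurd List.isChain_nil hc
  | cons st T ih =>
    intro p q hW hc
    obtain ⟨hp, hv, h'⟩ := hW.inv
    cases T with
    | nil => exact absurd (List.isChain_singleton st) hc
    | cons st' T' =>
      obtain ⟨hadj, hv', h''⟩ := h'.inv
      unfold List.Chain' at hc; rw [List.isChain_cons_cons] at hc
      by_cases hee : st.e = st'.e
      · -- merge the two steps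
        have hb : st'.a ∈ Set.Icc 0 (R.graph.len st.e) := by rw [hee]; exact hv'.1
        have hab : st.b = st'.a := by
          refine param_inj R hv.2 hb ?_
          have : st'.beg = R.graph.param st.e st'.a := by
            unfold Stp.beg; rw [hee]
          rw [← this]
          exact hadj
        set nst : Stp R := ⟨st.e, st.a, st'.b⟩ with hnst
        have hnv : nst.valid := ⟨hv.1, by rw [hnst]; simp only; rw [hee]; exact hv'.2⟩
        have hnfin : nst.fin = st'.fin := by
          unfold Stp.fin; rw [hnst]; simp only; rw [hee]
        have hnbeg : nst.beg = st.beg := rfl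
        refine ⟨nst :: T', IsWalk.cons' (by rw [hp, hnbeg]) hnv (by rw [hnfin]; exact h''),
          ?_, by simp only [List.length_cons]; omega⟩
        rw [wlen_cons, wlen_cons, wlen_cons]
        have htri : |st.a - st'.b| ≤ |st.a - st.b| + |st.b - st'.b| := abs_sub_le _ _ _
        have h1 : nst.slen = |st.a - st'.b| := rfl
        have h2 : st.slen = |st.a - st.b| := rfl
        have h3 : st'.slen = |st'.a - st'.b| := rfl
        rw [h1, h2, h3, ← hab]
        linarith
      · have hc' : ¬ (st' :: T').Chain' (fun a b : Stp R => a.e ≠ b.e) := by tauto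
        obtain ⟨W', h1, h2, h3⟩ := ih st.fin q h' hc'
        refine ⟨st :: W', IsWalk.cons' hp hv h1, ?_, ?_⟩
        · rw [wlen_cons, wlen_cons]; linarith
        · simp only [List.length_cons] at h3 ⊢; omega

end Surgery

section KeyBound

variable (R : ReebGraphOf X r G)

lemma key_ub [CompactSpace X] [ConnectedSpace X] (hX : IsGeodesicSpace X) (x y : X) :
    dist x y ≤ dist (R.π x) (R.π y) +
      2 * ((R.graph.betti1 : ℝ) + 1) * R.fiberDiamSup := by
  haveI : Nonempty X := ⟨x⟩
  have hM0 : 0 ≤ R.fiberDiamSup := Msup_nonneg R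
  refine le_of_forall_pos_le_add fun ε hε => ?_
  classical
  have hTne : ∃ n, ∃ W : List (Stp R), IsWalk R (R.π x) (R.π y) W ∧
      wlen W ≤ dist (R.π x) (R.π y) + ε ∧ W.length = n := by
    obtain ⟨W, hW, hl⟩ := exists_walk_lt R (p := R.π x) (q := R.π y) hε
    exact ⟨W.length, W, hW, hl.le, rfl⟩
  obtain ⟨W, hW, hlen, hn⟩ := Nat.find_spec hTne
  have hmin := fun m (hm : m < Nat.find hTne) => Nat.find_min hTne hm
  have hnd : (walkPts (R.π x) W).Nodup := by
    by_contra hdup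
    obtain ⟨W', h1, h2, h3⟩ := shorter_of_dup W _ _ hW hdup
    exact hmin W'.length (by omega) ⟨W', h1, le_trans h2 hlen, rfl⟩
  have hch : W.Chain' (fun a b : Stp R => a.e ≠ b.e) := by
    by_contra hc
    obtain ⟨W', h1, h2, h3⟩ := shorter_of_dupedge W _ _ hW hc
    exact hmin W'.length (by omega) ⟨W', h1, le_trans h2 hlen, rfl⟩
  have hkap := kap_le W _ _ hW hnd hch
  have hmc : mcount R (walkPts (R.π x) W) ≤ R.graph.betti1 :=
    le_trans (mcount_le_card _ (mrgF R) hnd (fun v _ h => mem_mrgF R h)) (betti_count R hX)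
  obtain ⟨w, hw, hdw⟩ := main_lift R hX W.length W _ _ x (le_refl _) hW rfl
  have hfib : dist w y ≤ R.fiberDiamSup := dist_le_Msup R (by rw [hw])
  have hkap' : (kap false W : ℝ) ≤ 2 * (R.graph.betti1 : ℝ) + 1 := by
    have h : kap false W ≤ 2 * R.graph.betti1 + 1 := by omega
    exact_mod_cast h
  have hmul : R.fiberDiamSup * (kap false W : ℝ) ≤
      R.fiberDiamSup * (2 * (R.graph.betti1 : ℝ) + 1) :=
    mul_le_mul_of_nonneg_left hkap' hM0
  calc dist x y ≤ dist x w + dist w y := dist_triangle _ _ _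
    _ ≤ (wlen W + R.fiberDiamSup * (kap false W : ℝ)) + R.fiberDiamSup :=
        add_le_add hdw hfib
    _ ≤ (dist (R.π x) (R.π y) + ε + R.fiberDiamSup * (2 * (R.graph.betti1 : ℝ) + 1)) +
        R.fiberDiamSup := by linarith
    _ = dist (R.π x) (R.π y) + 2 * ((R.graph.betti1 : ℝ) + 1) * R.fiberDiamSup + ε := by
        ring

end KeyBound

end ReebAux
/-- The Gromov-Hausdorff distance between a compact connected geodesic space `X` and the
metric Reeb graph `G` of `d = d_X(r,·)` is at most `(β₁(G)+1)·M`, where `M` is the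
supremum of the diameters of the fibers of the quotient map `π`. -/
theorem ghDist_le_reeb {X : Type*} [MetricSpace X] [CompactSpace X] [Nonempty X]
    [ConnectedSpace X] (hX : IsGeodesicSpace X) (r : X)
    {G : Type*} [MetricSpace G] [CompactSpace G] [Nonempty G] (R : ReebGraphOf X r G) :
    GromovHausdorff.ghDist X G ≤ ((R.graph.betti1 : ℝ) + 1) * R.fiberDiamSup := by
  classical
  have hM0 : 0 ≤ R.fiberDiamSup := ReebAux.Msup_nonneg R
  set C : ℝ := ((R.graph.betti1 : ℝ) + 1) * R.fiberDiamSup with hC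
  have hC0 : 0 ≤ C := mul_nonneg (by positivity) hM0
  have h := GromovHausdorff.ghDist_le_of_approx_subsets (X := X) (Y := G)
    (s := (Set.univ : Set X)) (fun x => R.π x.1) (ε₁ := 0) (ε₂ := 2 * C) (ε₃ := 0)
    (fun x => ⟨x, Set.mem_univ x, by simp⟩)
    (fun g => by
      obtain ⟨x, hx⟩ := R.surj g
      exact ⟨⟨x, Set.mem_univ x⟩, by simp [hx]⟩)
    (fun x y => by
      rw [Subtype.dist_eq]
      rw [abs_le]
      constructor
      · have h1 := ReebAux.pi_lipschitz R hX x.1 y.1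
        linarith
      · have h2 := ReebAux.key_ub R hX x.1 y.1
        rw [hC]
        linarith)
  calc GromovHausdorff.ghDist X G ≤ 0 + 2 * C / 2 + 0 := h
    _ = C := by ring
end

section
/- Let (X,d_X) be a compact connected geodesic space with finite Reeb graph G of d = d_X(r,·). Let p, p' ∈ G and let δ : [d_*(p), d_*(p')] → G be a strictly increasing path (with respect to d_*) from p to p' whose interior contains no merging vertex. Then for any x' ∈ π^{-1}(p') lying in the closure of π^{-1}(δ((d_*(p), d_*(p')))), there exists a shortest path γ in X from some point x ∈ π^{-1}(p) to x' with π(γ) = δ and d_X(x,x') = d(x') − d(x) = d_G(p,p'). -/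
open Set Metric

namespace ReebGraphOf

variable {X : Type*} [MetricSpace X] {r : X} {G : Type*} [MetricSpace G]

/-- Local structure of a punctured ball around a point `q` of the graph: any point `z`
close enough to `q` with `dStar z < dStar q` lies in the open part of an edge whose
closed image contains `q`, either as its target or as an interior point. -/
lemma aux_ball_struct (R : ReebGraphOf X r G) (q : G) :
    ∃ ε > 0, ∀ z : G, dist z q < ε → R.dStar z < R.dStar q →
      ∃ f s, s ∈ Set.Ioo 0 (R.graph.len f) ∧ R.graph.param f s = z ∧
        R.dStar z = R.dStar (R.graph.param f 0) + s ∧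
        (R.graph.tgt f = q ∨
          ∃ u ∈ Set.Ioo 0 (R.graph.len f), R.graph.param f u = q ∧
            R.dStar q = R.dStar (R.graph.param f 0) + u) := by
  classical
  haveI : Fintype R.graph.E := R.graph.fintypeE
  set M := R.graph with hM
  have himg : ∀ f : M.E, IsClosed (M.param f '' Set.Icc 0 (M.len f)) := fun f =>
    (isCompact_Icc.image_of_continuousOn (M.param_lipschitz f).continuousOn).isClosed
  have hfinV : M.vertexSet.Finite := by
    have hsub : M.vertexSet ⊆ ⋃ e : M.E, {M.src e, M.tgt e} := by
      rintro v ⟨e, h | h⟩ <;> exact Set.mem_iUnion.2 ⟨e, by simp [h]⟩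
    exact (Set.finite_iUnion (fun e => (Set.finite_singleton _).insert _)).subset hsub
  set B : Set G := (⋃ f : {f : M.E // q ∉ M.param f '' Set.Icc 0 (M.len f)},
      M.param (f : M.E) '' Set.Icc 0 (M.len (f : M.E))) ∪ (M.vertexSet \ {q}) with hB
  have hBclosed : IsClosed B := by
    rw [hB]
    exact (isClosed_iUnion_of_finite
        (s := fun f : {f : M.E // q ∉ M.param f '' Set.Icc 0 (M.len f)} =>
          M.param (f : M.E) '' Set.Icc 0 (M.len (f : M.E)))
        (fun f => himg (f : M.E))).union
      ((hfinV.subset (Set.diff_subset : M.vertexSet \ {q} ⊆ _)).isClosed)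
  have hqB : q ∉ B := by
    intro h
    rcases h with h | h
    · rcases Set.mem_iUnion.1 h with ⟨f, hf⟩; exact f.2 hf
    · exact h.2 rfl
  obtain ⟨ε, hε, hball⟩ := Metric.isOpen_iff.1 hBclosed.isOpen_compl q hqB
  refine ⟨ε, hε, fun z hz hdz => ?_⟩
  have hzB : z ∉ B := hball hz
  obtain ⟨f, s, hs, hfs⟩ := M.cover z
  have hq : q ∈ M.param f '' Set.Icc 0 (M.len f) := by
    by_contra h
    exact hzB (Or.inl (Set.mem_iUnion.2 ⟨⟨f, h⟩, ⟨s, hs, hfs⟩⟩))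
  have hzq : z ≠ q := fun h => by rw [h] at hdz; exact lt_irrefl _ hdz
  have hsIoo : s ∈ Set.Ioo 0 (M.len f) := by
    rcases eq_or_lt_of_le hs.1 with h0 | h0
    · exact absurd (Or.inr ⟨⟨f, Or.inl (by rw [MetricGraphStruct.src, h0, hfs])⟩, hzq⟩) hzB
    rcases eq_or_lt_of_le hs.2 with h1 | h1
    · exact absurd (Or.inr ⟨⟨f, Or.inr (by rw [MetricGraphStruct.tgt, ← h1, hfs])⟩, hzq⟩) hzB
    exact ⟨h0, h1⟩
  have hdzz : R.dStar z = R.dStar (M.param f 0) + s := by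
    rw [← hfs]; exact R.dStar_param f s hs
  refine ⟨f, s, hsIoo, hfs, hdzz, ?_⟩
  obtain ⟨u, hu, hfu⟩ := hq
  have hdq : R.dStar q = R.dStar (M.param f 0) + u := by
    rw [← hfu]; exact R.dStar_param f u hu
  rcases eq_or_lt_of_le hu.1 with h0 | h0
  · exfalso
    have h1 : R.dStar (M.param f 0) = R.dStar q := by rw [hdq, ← h0, add_zero]
    have h2 : s = R.dStar z - R.dStar q := by rw [hdzz, h1]; ring
    have := hsIoo.1
    linarith
  rcases eq_or_lt_of_le hu.2 with h1 | h1
  · left; rw [MetricGraphStruct.tgt, ← h1]; exact hfu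
  · right; exact ⟨u, ⟨h0, h1⟩, hfu, hdq⟩

/-- Local rigidity near a point `q`: close to `q`, at heights below `dStar q`,
distances to `q` are controlled by `dStar`, and if `q` is not a merging vertex
there is a unique point at each height. -/
lemma aux_key (R : ReebGraphOf X r G) (q : G) :
    ∃ ε > 0, ∀ z : G, dist z q < ε → R.dStar z < R.dStar q →
      dist z q ≤ R.dStar q - R.dStar z ∧
      (¬ R.IsMergingVertex q → ∀ w : G, dist w q < ε → R.dStar w = R.dStar z → z = w) := by
  obtain ⟨ε, hε, hstruct⟩ := R.aux_ball_struct q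
  set M := R.graph with hM
  refine ⟨ε, hε, fun z hz hdz => ?_⟩
  obtain ⟨f, s, hsIoo, hfs, hdzz, hcase⟩ := hstruct z hz hdz
  constructor
  · -- distance bound
    rcases hcase with htgt | ⟨u, huIoo, hfu, hdq⟩
    · have hdq : R.dStar q = R.dStar (M.param f 0) + M.len f := by
        rw [← htgt, MetricGraphStruct.tgt]
        exact R.dStar_param f (M.len f) ⟨le_of_lt (M.len_pos f), le_refl _⟩
      have hd : dist z q = dist (M.param f s) (M.param f (M.len f)) := by
        rw [hfs, ← htgt]; rfl
      have hle := (M.param_lipschitz f).dist_le_mul s ⟨le_of_lt hsIoo.1, le_of_lt hsIoo.2⟩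
        (M.len f) ⟨le_of_lt (M.len_pos f), le_refl _⟩
      rw [hd]
      calc dist (M.param f s) (M.param f (M.len f)) ≤ 1 * dist s (M.len f) := by
            exact_mod_cast hle
        _ = |s - M.len f| := by rw [one_mul, Real.dist_eq]
        _ = M.len f - s := by rw [abs_of_nonpos (by linarith [hsIoo.2])]; ring
        _ = R.dStar q - R.dStar z := by rw [hdq, hdzz]; ring
    · have hle := (M.param_lipschitz f).dist_le_mul s ⟨le_of_lt hsIoo.1, le_of_lt hsIoo.2⟩
        u ⟨le_of_lt huIoo.1, le_of_lt huIoo.2⟩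
      have hd : dist z q = dist (M.param f s) (M.param f u) := by rw [hfs, hfu]
      have hsu : s < u := by
        have : R.dStar z < R.dStar q := hdz
        rw [hdzz, hdq] at this; linarith
      rw [hd]
      calc dist (M.param f s) (M.param f u) ≤ 1 * dist s u := by exact_mod_cast hle
        _ = |s - u| := by rw [one_mul, Real.dist_eq]
        _ = u - s := by rw [abs_of_nonpos (by linarith)]; ring
        _ = R.dStar q - R.dStar z := by rw [hdq, hdzz]; ring
  · -- uniqueness
    intro hnm w hw hdw
    have hdw' : R.dStar w < R.dStar q := by rw [hdw]; exact hdz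
    obtain ⟨g, t, htIoo, hgt, hdww, hcase'⟩ := hstruct w hw hdw'
    have hfg : f = g := by
      rcases hcase with htgt | ⟨u, huIoo, hfu, _⟩
      · rcases hcase' with htgt' | ⟨u', huIoo', hgu', _⟩
        · by_contra hne
          exact hnm ⟨f, g, hne, htgt, htgt'⟩
        · exact absurd ((M.endpoint_not_interior f g u' huIoo').2)
            (by rw [MetricGraphStruct.tgt] at htgt; rw [htgt, hgu']; simp)
      · rcases hcase' with htgt' | ⟨u', huIoo', hgu', _⟩
        · exact absurd ((M.endpoint_not_interior g f u huIoo).2)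
            (by rw [MetricGraphStruct.tgt] at htgt'; rw [htgt', hfu]; simp)
        · by_contra hne
          exact M.disjoint_interiors f g hne u huIoo u' huIoo' (by rw [hfu, hgu'])
    subst hfg
    have hst : s = t := by
      have h1 : R.dStar (M.param f 0) + t = R.dStar (M.param f 0) + s := by
        rw [← hdww, ← hdzz]; exact hdw
      linarith
    rw [← hfs, ← hgt, hst]

/-- Downward uniqueness of `dStar`-increasing paths: two such paths that agree at the
upper end of an interval and pass only through non-merging points agree everywhere. -/
lemma aux_unique (R : ReebGraphOf X r G) {a c : ℝ} (hac : a ≤ c) (δ η : ℝ → G)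
    (hδc : ContinuousOn δ (Set.Icc a c)) (hηc : ContinuousOn η (Set.Icc a c))
    (hδd : ∀ t ∈ Set.Icc a c, R.dStar (δ t) = t)
    (hηd : ∀ t ∈ Set.Icc a c, R.dStar (η t) = t)
    (hend : η c = δ c)
    (hnm : ∀ t ∈ Set.Ioc a c, ¬ R.IsMergingVertex (δ t)) :
    ∀ t ∈ Set.Icc a c, η t = δ t := by
  set T : Set ℝ := {t | t ∈ Set.Icc a c ∧ ∀ u ∈ Set.Icc t c, η u = δ u} with hT
  have hcT : c ∈ T := ⟨⟨hac, le_refl c⟩, fun u hu => by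
    have : u = c := le_antisymm hu.2 hu.1
    rw [this, hend]⟩
  have hTne : T.Nonempty := ⟨c, hcT⟩
  have hTbdd : BddBelow T := ⟨a, fun t ht => ht.1.1⟩
  set m := sInf T with hm
  have hmIcc : m ∈ Set.Icc a c := ⟨le_csInf hTne (fun t ht => ht.1.1), csInf_le hTbdd hcT⟩
  -- the agreement set is closed
  have hSclosed : IsClosed (Set.Icc a c ∩ (fun t => (η t, δ t)) ⁻¹' {p : G × G | p.1 = p.2}) :=
    (hηc.prodMk hδc).preimage_isClosed_of_isClosed isClosed_Icc
      (isClosed_eq continuous_fst continuous_snd)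
  have hmS : ∀ u ∈ Set.Icc m c, η u = δ u := by
    intro u hu
    rcases eq_or_lt_of_le hu.1 with h | h
    · have hTsub : T ⊆ Set.Icc a c ∩ (fun t => (η t, δ t)) ⁻¹' {p : G × G | p.1 = p.2} :=
        fun t ht => ⟨ht.1, ht.2 t ⟨le_refl t, ht.1.2⟩⟩
      have : m ∈ Set.Icc a c ∩ (fun t => (η t, δ t)) ⁻¹' {p : G × G | p.1 = p.2} :=
        hSclosed.closure_subset ((closure_mono hTsub) (csInf_mem_closure hTne hTbdd))
      rw [← h]; exact this.2
    · obtain ⟨t, htT, htu⟩ := exists_lt_of_csInf_lt hTne h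
      exact htT.2 u ⟨le_of_lt htu, hu.2⟩
  rcases eq_or_lt_of_le hmIcc.1 with hma | hma
  · exact fun t ht => hmS t ⟨by rw [← hma]; exact ht.1, ht.2⟩
  · exfalso
    set q := δ m with hq
    have hdq : R.dStar q = m := hδd m hmIcc
    have hηm : η m = q := hmS m ⟨le_refl m, hmIcc.2⟩
    have hnmq : ¬ R.IsMergingVertex q := hnm m ⟨hma, hmIcc.2⟩
    obtain ⟨ε, hε, hkey⟩ := R.aux_key q
    obtain ⟨ε₁, hε₁, hδcont⟩ := Metric.continuousWithinAt_iff.1 (hδc m hmIcc) ε hε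
    obtain ⟨ε₂, hε₂, hηcont⟩ := Metric.continuousWithinAt_iff.1 (hηc m hmIcc) ε hε
    set e' := min ε₁ ε₂ with he'
    have he'pos : 0 < e' := lt_min hε₁ hε₂
    set t₁ := max a (m - e' / 2) with ht₁
    have ht₁m : t₁ < m := max_lt hma (by linarith)
    have ht₁Icc : t₁ ∈ Set.Icc a c := ⟨le_max_left _ _, le_trans (le_of_lt ht₁m) hmIcc.2⟩
    have ht₁T : t₁ ∈ T := by
      refine ⟨ht₁Icc, fun u hu => ?_⟩
      rcases le_or_gt m u with hmu | hum
      · exact hmS u ⟨hmu, hu.2⟩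
      · have huIcc : u ∈ Set.Icc a c := ⟨le_trans ht₁Icc.1 hu.1, hu.2⟩
        have hud : dist u m < e' := by
          rw [Real.dist_eq, abs_of_nonpos (by linarith)]
          have : m - e' / 2 ≤ t₁ := le_max_right _ _
          have : m - e' / 2 ≤ u := le_trans this hu.1
          linarith
        have hδu : dist (δ u) q < ε := by
          have := hδcont huIcc (lt_of_lt_of_le hud (min_le_left _ _))
          rwa [← hq] at this
        have hηu : dist (η u) q < ε := by
          have := hηcont huIcc (lt_of_lt_of_le hud (min_le_right _ _))
          rwa [hηm] at this
        have hδd' : R.dStar (δ u) < R.dStar q := by rw [hδd u huIcc, hdq]; exact hum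
        have hηd' : R.dStar (η u) < R.dStar q := by rw [hηd u huIcc, hdq]; exact hum
        exact (hkey (η u) hηu hηd').2 hnmq (δ u) hδu
          (by rw [hδd u huIcc, hηd u huIcc])
    exact absurd (csInf_le hTbdd ht₁T) (not_le.2 ht₁m)

/-- A `dStar`-increasing path is left-1-Lipschitz towards its endpoint. -/
lemma aux_dist_le (R : ReebGraphOf X r G) {a b : ℝ} (hab : a ≤ b) (δ : ℝ → G)
    (hδc : ContinuousOn δ (Set.Icc a b))
    (hδd : ∀ t ∈ Set.Icc a b, R.dStar (δ t) = t) :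
    ∀ t ∈ Set.Icc a b, dist (δ t) (δ b) ≤ b - t := by
  set T : Set ℝ := {t | t ∈ Set.Icc a b ∧ ∀ u ∈ Set.Icc t b, dist (δ u) (δ b) ≤ b - u} with hT
  have hbT : b ∈ T := ⟨⟨hab, le_refl b⟩, fun u hu => by
    have : u = b := le_antisymm hu.2 hu.1
    simp [this]⟩
  have hTne : T.Nonempty := ⟨b, hbT⟩
  have hTbdd : BddBelow T := ⟨a, fun t ht => ht.1.1⟩
  set m := sInf T with hm
  have hmIcc : m ∈ Set.Icc a b := ⟨le_csInf hTne (fun t ht => ht.1.1), csInf_le hTbdd hbT⟩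
  have hSclosed : IsClosed (Set.Icc a b ∩ (fun t => dist (δ t) (δ b) - (b - t)) ⁻¹' Set.Iic 0) := by
    refine ContinuousOn.preimage_isClosed_of_isClosed ?_ isClosed_Icc isClosed_Iic
    exact ((continuous_dist.comp_continuousOn (hδc.prodMk continuousOn_const)).sub
      (continuous_const.sub continuous_id).continuousOn)
  have hmS : ∀ u ∈ Set.Icc m b, dist (δ u) (δ b) ≤ b - u := by
    intro u hu
    rcases eq_or_lt_of_le hu.1 with h | h
    · have hTsub : T ⊆ Set.Icc a b ∩ (fun t => dist (δ t) (δ b) - (b - t)) ⁻¹' Set.Iic 0 :=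
        fun t ht => ⟨ht.1, by
          have := ht.2 t ⟨le_refl t, ht.1.2⟩
          simp only [Set.mem_preimage, Set.mem_Iic]
          linarith⟩
      have hmem : m ∈ Set.Icc a b ∩ (fun t => dist (δ t) (δ b) - (b - t)) ⁻¹' Set.Iic 0 :=
        hSclosed.closure_subset ((closure_mono hTsub) (csInf_mem_closure hTne hTbdd))
      have := hmem.2
      simp only [Set.mem_preimage, Set.mem_Iic] at this
      rw [← h]; linarith
    · obtain ⟨t, htT, htu⟩ := exists_lt_of_csInf_lt hTne h
      exact htT.2 u ⟨le_of_lt htu, hu.2⟩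
  rcases eq_or_lt_of_le hmIcc.1 with hma | hma
  · exact fun t ht => hmS t ⟨by rw [← hma]; exact ht.1, ht.2⟩
  · exfalso
    set q := δ m with hq
    have hdq : R.dStar q = m := hδd m hmIcc
    obtain ⟨ε, hε, hkey⟩ := R.aux_key q
    obtain ⟨ε₁, hε₁, hδcont⟩ := Metric.continuousWithinAt_iff.1 (hδc m hmIcc) ε hε
    set t₁ := max a (m - ε₁ / 2) with ht₁
    have ht₁m : t₁ < m := max_lt hma (by linarith)
    have ht₁Icc : t₁ ∈ Set.Icc a b := ⟨le_max_left _ _, le_trans (le_of_lt ht₁m) hmIcc.2⟩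
    have ht₁T : t₁ ∈ T := by
      refine ⟨ht₁Icc, fun u hu => ?_⟩
      rcases le_or_gt m u with hmu | hum
      · exact hmS u ⟨hmu, hu.2⟩
      · have huIcc : u ∈ Set.Icc a b := ⟨le_trans ht₁Icc.1 hu.1, hu.2⟩
        have hud : dist u m < ε₁ := by
          rw [Real.dist_eq, abs_of_nonpos (by linarith)]
          have h1 : m - ε₁ / 2 ≤ t₁ := le_max_right _ _
          have h2 : m - ε₁ / 2 ≤ u := le_trans h1 hu.1
          linarith
        have hδu : dist (δ u) q < ε := by
          have := hδcont huIcc hud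
          rwa [← hq] at this
        have hδd' : R.dStar (δ u) < R.dStar q := by rw [hδd u huIcc, hdq]; exact hum
        have h1 : dist (δ u) q ≤ R.dStar q - R.dStar (δ u) := (hkey (δ u) hδu hδd').1
        rw [hdq, hδd u huIcc] at h1
        have h2 : dist q (δ b) ≤ b - m := hmS m ⟨le_refl m, hmIcc.2⟩
        calc dist (δ u) (δ b) ≤ dist (δ u) q + dist q (δ b) := dist_triangle _ _ _
          _ ≤ (m - u) + (b - m) := add_le_add h1 h2
          _ = b - u := by ring
    exact absurd (csInf_le hTbdd ht₁T) (not_le.2 ht₁m)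

end ReebGraphOf

/-- Lifting of monotone paths in the Reeb graph: if `δ` is a `d_*`-strictly increasing
path in the metric Reeb graph `G` from `p` to `p'` (parametrized by the values of `d_*`)
whose interior contains no merging vertex, then for any `x' ∈ π⁻¹(p')` lying in the
closure of `π⁻¹(δ((d_*(p), d_*(p'))))` there is a shortest path `γ` in `X` from some
`x ∈ π⁻¹(p)` to `x'` with `π ∘ γ = δ` and
`d_X(x,x') = d(x') - d(x) = d_G(p,p')`. -/
theorem lift_increasing_path_reeb {X : Type*} [MetricSpace X] [CompactSpace X]
    [ConnectedSpace X] (hX : IsGeodesicSpace X) (r : X)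
    {G : Type*} [MetricSpace G] (R : ReebGraphOf X r G)
    (p p' : G) (hpp' : R.dStar p ≤ R.dStar p')
    (δ : ℝ → G) (hδc : ContinuousOn δ (Set.Icc (R.dStar p) (R.dStar p')))
    (hδp : δ (R.dStar p) = p) (hδp' : δ (R.dStar p') = p')
    (hδinc : ∀ t ∈ Set.Icc (R.dStar p) (R.dStar p'), R.dStar (δ t) = t)
    (hnomerge : ∀ t ∈ Set.Ioo (R.dStar p) (R.dStar p'), ¬ R.IsMergingVertex (δ t))
    (x' : X) (hx'p : R.π x' = p')
    (hx'cl : x' ∈ closure (R.π ⁻¹' (δ '' Set.Ioo (R.dStar p) (R.dStar p')))) :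
    ∃ x : X, R.π x = p ∧
      dist x x' = dist r x' - dist r x ∧
      dist x x' = dist p p' ∧
      ∃ γ : ℝ → X, γ (R.dStar p) = x ∧ γ (R.dStar p') = x' ∧
        (∀ s ∈ Set.Icc (R.dStar p) (R.dStar p'), ∀ t ∈ Set.Icc (R.dStar p) (R.dStar p'),
          dist (γ s) (γ t) = |s - t|) ∧
        ∀ t ∈ Set.Icc (R.dStar p) (R.dStar p'), R.π (γ t) = δ t := by
  classical
  set a := R.dStar p with ha
  set b := R.dStar p' with hb
  have hab : a < b := by
    rcases eq_or_lt_of_le hpp' with h | h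
    · exfalso; rw [← h] at hx'cl; simp at hx'cl
    · exact h
  have ha0 : 0 ≤ a := by
    obtain ⟨x₀, hx₀⟩ := R.surj p
    rw [ha, ← hx₀, R.dStar_π]
    exact dist_nonneg
  have hrx' : dist r x' = b := by rw [← R.dStar_π x', hx'p]
  obtain ⟨xs, hxs_mem, hxs_lim⟩ := mem_closure_iff_seq_limit.1 hx'cl
  have hmem : ∀ n, ∃ t ∈ Set.Ioo a b, δ t = R.π (xs n) := fun n => by
    obtain ⟨t, ht, hδt⟩ := hxs_mem n
    exact ⟨t, ht, hδt⟩
  choose ts hts hδts using hmem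
  have hdxs : ∀ n, dist r (xs n) = ts n := fun n => by
    rw [← R.dStar_π (xs n), ← hδts n, hδinc (ts n) (Set.Ioo_subset_Icc_self (hts n))]
  have htsb : Filter.Tendsto ts Filter.atTop (nhds b) := by
    have h1 : Filter.Tendsto (fun n => dist r (xs n)) Filter.atTop (nhds (dist r x')) :=
      ((continuous_const.dist continuous_id).tendsto x').comp hxs_lim
    rw [hrx'] at h1
    simpa only [hdxs] using h1
  choose σ hσ0 hσend hσiso using fun n => hX r (xs n)
  have hproj : ∀ n, ∀ u ∈ Set.Icc a (ts n), R.π (σ n u) = δ u := by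
    intro n
    have hanb : a ≤ ts n := le_of_lt (hts n).1
    have hsub : Set.Icc a (ts n) ⊆ Set.Icc 0 (ts n) := Set.Icc_subset_Icc_left ha0
    have hsub' : Set.Icc a (ts n) ⊆ Set.Icc a b :=
      Set.Icc_subset_Icc_right (le_of_lt (hts n).2)
    have hiso : ∀ s ∈ Set.Icc 0 (ts n), ∀ t ∈ Set.Icc 0 (ts n),
        dist (σ n s) (σ n t) = |s - t| := by rw [← hdxs n]; exact hσiso n
    have hend : σ n (ts n) = xs n := by rw [← hdxs n]; exact hσend n
    have hσcont : ContinuousOn (σ n) (Set.Icc 0 (ts n)) := by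
      refine (LipschitzOnWith.of_dist_le_mul (K := 1) ?_).continuousOn
      intro s hs t ht
      rw [hiso s hs t ht, NNReal.coe_one, one_mul, Real.dist_eq]
    have hηd : ∀ u ∈ Set.Icc a (ts n), R.dStar (R.π (σ n u)) = u := by
      intro u hu
      rw [R.dStar_π]
      have h0 : dist (σ n 0) (σ n u) = |0 - u| :=
        hiso 0 ⟨le_refl 0, le_trans ha0 hanb⟩ u (hsub hu)
      rw [hσ0 n] at h0
      rw [h0, zero_sub, abs_neg, abs_of_nonneg (le_trans ha0 hu.1)]
    exact R.aux_unique hanb δ (fun u => R.π (σ n u))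
      (hδc.mono hsub') (R.continuous_π.comp_continuousOn (hσcont.mono hsub))
      (fun u hu => hδinc u (hsub' hu)) hηd
      (by show R.π (σ n (ts n)) = δ (ts n); rw [hend, ← hδts n])
      (fun u hu => hnomerge u ⟨hu.1, lt_of_le_of_lt hu.2 (hts n).2⟩)
  obtain ⟨U, hU⟩ := Ultrafilter.exists_le (Filter.atTop : Filter ℕ)
  have htsU : Filter.Tendsto ts ↑U (nhds b) := htsb.mono_left hU
  have hconv : ∀ t : ℝ, ∃ x : X, Filter.Tendsto (fun n => σ n (min t (ts n))) ↑U (nhds x) := by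
    intro t
    obtain ⟨x, -, hx⟩ := isCompact_univ.ultrafilter_le_nhds
      (Ultrafilter.map (fun n => σ n (min t (ts n))) U) (by simp)
    exact ⟨x, by rwa [Ultrafilter.coe_map] at hx⟩
  choose γ hγ using hconv
  have hmin_mem : ∀ t : ℝ, t ∈ Set.Icc a b → ∀ n, min t (ts n) ∈ Set.Icc 0 (dist r (xs n)) := by
    intro t ht n
    rw [hdxs n]
    exact ⟨le_min (le_trans ha0 ht.1) (le_trans ha0 (le_of_lt (hts n).1)), min_le_right _ _⟩
  have hdist : ∀ s ∈ Set.Icc a b, ∀ t ∈ Set.Icc a b, dist (γ s) (γ t) = |s - t| := by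
    intro s hs t ht
    have h1 : Filter.Tendsto (fun n => dist (σ n (min s (ts n))) (σ n (min t (ts n)))) ↑U
        (nhds (dist (γ s) (γ t))) := (hγ s).dist (hγ t)
    have h2 : (fun n => dist (σ n (min s (ts n))) (σ n (min t (ts n)))) =
        fun n => |min s (ts n) - min t (ts n)| := by
      funext n
      exact hσiso n _ (hmin_mem s hs n) _ (hmin_mem t ht n)
    rw [h2] at h1
    have h3 : Filter.Tendsto (fun n => |min s (ts n) - min t (ts n)|) ↑U (nhds |s - t|) := by
      have h4 := (((tendsto_const_nhds (x := s)).min htsU).sub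
        ((tendsto_const_nhds (x := t)).min htsU)).abs
      rwa [min_eq_left hs.2, min_eq_left ht.2] at h4
    exact tendsto_nhds_unique h1 h3
  have hγb : γ b = x' := by
    have h1 : Filter.Tendsto (fun n => σ n (min b (ts n))) ↑U (nhds (γ b)) := hγ b
    have h2 : (fun n => σ n (min b (ts n))) = xs := by
      funext n
      rw [min_eq_right (le_of_lt (hts n).2), ← hdxs n]
      exact hσend n
    rw [h2] at h1
    exact tendsto_nhds_unique h1 (hxs_lim.mono_left hU)
  have hγπ : ∀ t ∈ Set.Icc a b, R.π (γ t) = δ t := by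
    intro t ht
    rcases eq_or_lt_of_le ht.2 with hteq | htlt
    · rw [hteq, hγb, hx'p]; exact hδp'.symm
    · have hev : ∀ᶠ n in ↑U, R.π (σ n (min t (ts n))) = δ t := by
        filter_upwards [htsU.eventually (eventually_gt_nhds htlt)] with n hn
        rw [min_eq_left (le_of_lt hn)]
        exact hproj n t ⟨ht.1, le_of_lt hn⟩
      have h1 : Filter.Tendsto (fun n => R.π (σ n (min t (ts n)))) ↑U (nhds (R.π (γ t))) :=
        (R.continuous_π.tendsto (γ t)).comp (hγ t)
      have h2 : Filter.Tendsto (fun n => R.π (σ n (min t (ts n)))) ↑U (nhds (δ t)) :=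
        Filter.Tendsto.congr' (hev.mono fun n h => h.symm) tendsto_const_nhds
      exact tendsto_nhds_unique h1 h2
  have hγr : ∀ t ∈ Set.Icc a b, dist r (γ t) = t := by
    intro t ht
    have h1 : Filter.Tendsto (fun n => dist r (σ n (min t (ts n)))) ↑U (nhds (dist r (γ t))) :=
      tendsto_const_nhds.dist (hγ t)
    have h2 : (fun n => dist r (σ n (min t (ts n)))) = fun n => min t (ts n) := by
      funext n
      have h0 : dist (σ n 0) (σ n (min t (ts n))) = |0 - min t (ts n)| :=
        hσiso n 0 ⟨le_refl 0, dist_nonneg⟩ _ (hmin_mem t ht n)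
      rw [hσ0 n] at h0
      rw [h0, zero_sub, abs_neg, abs_of_nonneg
        (le_min (le_trans ha0 ht.1) (le_trans ha0 (le_of_lt (hts n).1)))]
    rw [h2] at h1
    have h3 : Filter.Tendsto (fun n => min t (ts n)) ↑U (nhds t) := by
      have h4 := (tendsto_const_nhds (x := t)).min htsU
      rwa [min_eq_left ht.2] at h4
    exact tendsto_nhds_unique h1 h3
  have haIcc : a ∈ Set.Icc a b := ⟨le_refl a, hpp'⟩
  have hbIcc : b ∈ Set.Icc a b := ⟨hpp', le_refl b⟩
  have hdab : dist (γ a) x' = b - a := by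
    rw [← hγb, hdist a haIcc b hbIcc, abs_of_nonpos (by linarith)]; ring
  refine ⟨γ a, ?_, ?_, ?_, γ, rfl, hγb, hdist, hγπ⟩
  · rw [hγπ a haIcc, hδp]
  · rw [hdab, hrx', hγr a haIcc]
  · have hle : dist p p' ≤ b - a := by
      have h5 := R.aux_dist_le hpp' δ hδc hδinc a haIcc
      rwa [hδp, hδp'] at h5
    have hge : b - a ≤ dist p p' := by
      have hmax := R.graph.dist_maximal (fun u v => |R.dStar u - R.dStar v|)
        (fun u => by simp) (fun u v => abs_sub_comm _ _)
        (fun u v w => abs_sub_le _ _ _)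
        (fun e s hs t ht => by
          show |R.dStar (R.graph.param e s) - R.dStar (R.graph.param e t)| ≤ |s - t|
          rw [R.dStar_param e s hs, R.dStar_param e t ht]
          apply le_of_eq
          congr 1
          ring)
      calc b - a ≤ |a - b| := by rw [abs_sub_comm]; exact le_abs_self _
        _ ≤ dist p p' := hmax p p'
    rw [hdab]
    linarith
end
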